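/- arXiv:0709.2868 — 7 statements merged into one kernel-verified Lean document; each statement's English description precedes it below -/
import Mathlib

section
/- Let f be an irreducible polynomial over ℚ of prime degree p ≥ 5 that has at least one non-real complex root. If f is solvable by radicals, then f has exactly one real root, and the Galois group Gal(f/ℚ), acting on the p roots of f in ℂ, is a Frobenius group of degree p: the action is transitive, some point stabilizer is nontrivial, and every non-identity element of Gal(f/ℚ) fixes at most one root. -/
open Polynomial
open scoped commutatorElement

attribute [local instance] Polynomial.Gal.splits_ℚ_ℂ

/-- Key group-theoretic lemma (Galois): a solvable group acting faithfully and transitively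
on a set of prime cardinality is such that every non-identity element fixes at most one point. -/
theorem frobenius_key {G : Type*} [Group G] [Group.IsSolvable G] {Ω : Type*} [Finite Ω]
    [MulAction G Ω]
    (hfaith : ∀ g : G, (∀ z : Ω, g • z = z) → g = 1)
    (htrans : ∀ a b : Ω, ∃ g : G, g • a = b)
    {p : ℕ} (hp : p.Prime) (hcard : Nat.card Ω = p) :
    ∀ g : G, g ≠ 1 → ∀ x y : Ω, g • x = x → g • y = y → x = y := by
  classical
  haveI : MulAction.IsPretransitive G Ω := ⟨htrans⟩
  intro g hg x y hx hy
  by_contra hxy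
  haveI : Nontrivial G := ⟨g, 1, hg⟩
  -- the last nontrivial term of the derived series
  have hex : ∃ n, derivedSeries G n = ⊥ := Group.IsSolvable.solvable
  have hbot : derivedSeries G (Nat.find hex) = ⊥ := Nat.find_spec hex
  have hn0 : Nat.find hex ≠ 0 := by
    intro h
    rw [h, derivedSeries_zero] at hbot
    exact top_ne_bot hbot
  set N : Subgroup G := derivedSeries G (Nat.find hex - 1) with hNdef
  have hNbot : N ≠ ⊥ := Nat.find_min hex (Nat.sub_lt (Nat.pos_of_ne_zero hn0) one_pos)
  haveI hNnormal : N.Normal := derivedSeries_normal G _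
  have hcomm : ∀ a ∈ N, ∀ b ∈ N, a * b = b * a := by
    intro a ha b hb
    have h1 : ⁅N, N⁆ = ⊥ := by
      have h2 := hbot
      rwa [← Nat.succ_pred_eq_of_pos (Nat.pos_of_ne_zero hn0), derivedSeries_succ] at h2
    have h2 : ⁅a, b⁆ ∈ (⊥ : Subgroup G) := h1 ▸ Subgroup.commutator_mem_commutator ha hb
    rw [Subgroup.mem_bot] at h2
    exact commutatorElement_eq_one_iff_mul_comm.mp h2
  -- N is transitive
  obtain ⟨m₀, hm₀⟩ := Subgroup.ne_bot_iff_exists_ne_one.mp hNbot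
  obtain ⟨z, hz⟩ : ∃ z : Ω, (m₀ : G) • z ≠ z := by
    by_contra h
    push_neg at h
    exact hm₀ (Subtype.ext (hfaith _ h))
  have horb : MulAction.orbit N z = Set.univ := by
    have hB : MulAction.IsBlock G (MulAction.orbit N z) := MulAction.IsBlock.orbit_of_normal z
    have hne : (MulAction.orbit N z).Nonempty := ⟨z, MulAction.mem_orbit_self z⟩
    have hdvd : (MulAction.orbit N z).ncard ∣ p := hcard ▸ hB.ncard_dvd_card hne
    have hne1 : (MulAction.orbit N z).ncard ≠ 1 := by
      intro h
      obtain ⟨a, ha⟩ := Set.ncard_eq_one.mp h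
      have h1 : (m₀ : G) • z ∈ MulAction.orbit N z := ⟨m₀, rfl⟩
      have h2 : z ∈ MulAction.orbit N z := MulAction.mem_orbit_self z
      rw [ha, Set.mem_singleton_iff] at h1 h2
      exact hz (h1.trans h2.symm)
    have hcardeq : (MulAction.orbit N z).ncard = p :=
      ((Nat.Prime.eq_one_or_self_of_dvd hp _ hdvd).resolve_left hne1)
    apply Set.eq_of_subset_of_ncard_le (Set.subset_univ _)
    rw [Set.ncard_univ, hcard, hcardeq]
  have htransN : ∀ a b : Ω, ∃ m : N, (m : G) • a = b := by
    intro a b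
    have ha : a ∈ MulAction.orbit N z := horb ▸ Set.mem_univ a
    have hb : b ∈ MulAction.orbit N z := horb ▸ Set.mem_univ b
    obtain ⟨ma, hma⟩ := ha
    obtain ⟨mb, hmb⟩ := hb
    refine ⟨mb * ma⁻¹, ?_⟩
    have hma' : (ma : G) • z = a := hma
    have hmb' : (mb : G) • z = b := hmb
    push_cast
    rw [mul_smul, ← hma', inv_smul_smul, hmb']
  -- an element of N fixing a point is trivial
  have hreg : ∀ m : N, ∀ a : Ω, (m : G) • a = a → (m : G) = 1 := by
    intro m a ha
    apply hfaith
    intro w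
    obtain ⟨m', hm'⟩ := htransN a w
    rw [← hm', ← mul_smul, hcomm _ m.2 _ m'.2, mul_smul, ha]
  -- N has cardinality p
  have hNcard : Nat.card N = p := by
    rw [← hcard]
    apply Nat.card_eq_of_bijective (fun m : N => (m : G) • x)
    constructor
    · intro m m' hmm'
      have hmm2 : ((m : G)) • x = ((m' : G)) • x := hmm'
      have h5 : ((m'⁻¹ * m : N) : G) • x = x := by
        push_cast
        rw [mul_smul, hmm2, ← mul_smul, inv_mul_cancel, one_smul]
      have h6 : (m'⁻¹ * m : N) = 1 := Subtype.ext (hreg _ _ h5)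
      rwa [inv_mul_eq_one, eq_comm] at h6
    · intro w
      obtain ⟨m, hm⟩ := htransN x w
      exact ⟨m, hm⟩
  haveI : Finite N := Nat.finite_of_card_ne_zero (by rw [hNcard]; exact hp.pos.ne')
  -- n₀ moves x to y, and generates N
  obtain ⟨n₀, hn₀⟩ := htransN x y
  have hn₀ne : n₀ ≠ 1 := by
    rintro rfl
    rw [Subgroup.coe_one, one_smul] at hn₀
    exact hxy hn₀
  have hgen : ∀ m : N, ∃ k : ℤ, n₀ ^ k = m := by
    have horder : orderOf n₀ = p := by
      have h1 : orderOf n₀ ∣ p := hNcard ▸ orderOf_dvd_natCard n₀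
      rcases (Nat.Prime.eq_one_or_self_of_dvd hp _ h1) with h | h
      · exact absurd (orderOf_eq_one_iff.mp h) hn₀ne
      · exact h
    have htop : Subgroup.zpowers n₀ = ⊤ := by
      apply Subgroup.eq_top_of_card_eq
      rw [Nat.card_zpowers, horder, hNcard]
    intro m
    have : m ∈ Subgroup.zpowers n₀ := htop ▸ Subgroup.mem_top m
    exact this
  -- g commutes with n₀
  have hconj : g * (n₀ : G) * g⁻¹ ∈ N := hNnormal.conj_mem _ n₀.2 g
  have hfix : (g * (n₀ : G) * g⁻¹) • x = (n₀ : G) • x := by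
    have hx' : g⁻¹ • x = x := by
      conv_lhs => rw [← hx]
      rw [← mul_smul, inv_mul_cancel, one_smul]
    rw [mul_smul, mul_smul, hx', hn₀, hy]
  have hcomm' : g * (n₀ : G) = (n₀ : G) * g := by
    have h1 : ((n₀ : G)⁻¹ * (g * (n₀ : G) * g⁻¹)) • x = x := by
      rw [mul_smul, hfix, ← mul_smul, inv_mul_cancel, one_smul]
    have h2 : (n₀ : G)⁻¹ * (g * (n₀ : G) * g⁻¹) ∈ N :=
      N.mul_mem (N.inv_mem n₀.2) hconj
    have h3 := hreg ⟨_, h2⟩ x h1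
    have h4 : (n₀ : G)⁻¹ * (g * (n₀ : G) * g⁻¹) = 1 := h3
    have h5 : (n₀ : G) = g * (n₀ : G) * g⁻¹ := inv_mul_eq_one.mp h4
    calc g * (n₀ : G) = (g * (n₀ : G) * g⁻¹) * g := by group
    _ = (n₀ : G) * g := by rw [← h5]
  -- hence g commutes with all of N, hence fixes every point, contradiction
  apply hg
  apply hfaith
  intro w
  obtain ⟨m, hm⟩ := htransN x w
  obtain ⟨k, hk⟩ := hgen m
  have hcommk : g * (m : G) = (m : G) * g := by
    rw [← hk]
    push_cast
    exact (Commute.zpow_right (by exact hcomm') k).eq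
  rw [← hm, ← mul_smul, hcommk, mul_smul, hx]

/-- Let `f` be an irreducible polynomial over `ℚ` of prime degree `p ≥ 5` having at least one
non-real complex root. If `f` is solvable by radicals, then `f` has exactly one real root and
`Gal(f/ℚ)`, acting on the `p` roots of `f` in `ℂ`, is a Frobenius group of degree `p`:
the action is transitive, some point stabilizer is nontrivial, and every non-identity
element fixes at most one root. -/
theorem frobenius_of_solvable_with_complex_root
    (f : ℚ[X]) (hirr : Irreducible f) (p : ℕ) (hp : p.Prime) (hp5 : 5 ≤ p)
    (hdeg : f.natDegree = p)
    (hcomplex : ∃ x ∈ f.rootSet ℂ, x.im ≠ 0)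
    (hsolv : ∀ x ∈ f.rootSet ℂ, IsSolvableByRad ℚ x) :
    Fintype.card (f.rootSet ℝ) = 1 ∧
    (∀ x y : f.rootSet ℂ, ∃ g : f.Gal, Polynomial.Gal.galActionHom f ℂ g x = y) ∧
    (∃ (x : f.rootSet ℂ) (g : f.Gal), g ≠ 1 ∧ Polynomial.Gal.galActionHom f ℂ g x = x) ∧
    (∀ g : f.Gal, g ≠ 1 → ∀ x y : f.rootSet ℂ,
      Polynomial.Gal.galActionHom f ℂ g x = x → Polynomial.Gal.galActionHom f ℂ g y = y →
        x = y) := by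
  classical
  obtain ⟨x₀, hx₀, hx₀im⟩ := hcomplex
  have hf0 : f ≠ 0 := fun h => by simp [h, rootSet_zero] at hx₀
  -- solvable Galois group
  have hmemrad : ∀ x : ℂ, IsSolvableByRad ℚ x → x ∈ solvableByRad ℚ ℂ := by
    intro x hx
    induction hx with
    | base α => exact IntermediateField.algebraMap_mem _ α
    | add α β _ _ ha hb => exact add_mem ha hb
    | neg α _ ha => exact neg_mem ha
    | mul α β _ _ ha hb => exact mul_mem ha hb
    | inv α _ ha => exact inv_mem ha
    | rad α n hn _ ha => exact solvableByRad.rad_mem hn ha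
  haveI hsolvG : Group.IsSolvable f.Gal :=
    solvableByRad.isSolvable' (hmemrad x₀ (hsolv x₀ hx₀)) hirr (mem_rootSet.mp hx₀).2
  -- number of complex roots
  have h1 : Fintype.card (f.rootSet ℂ) = p := by
    rw [← hdeg]
    simp_rw [rootSet_def, Finset.coe_sort_coe, Fintype.card_coe]
    rw [Multiset.toFinset_card_of_nodup, ← Splits.natDegree_eq_card_roots, natDegree_map]
    · exact IsAlgClosed.splits _
    · exact nodup_roots ((separable_map (algebraMap ℚ ℂ)).mpr hirr.separable)
  -- transitivity
  haveI htr := Polynomial.Gal.galAction_isPretransitive f ℂ hirr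
  have htrans : ∀ a b : f.rootSet ℂ, ∃ g : f.Gal, g • a = b := fun a b =>
    MulAction.exists_smul_eq f.Gal a b
  have hfaith : ∀ g : f.Gal, (∀ z : f.rootSet ℂ, g • z = z) → g = 1 := by
    intro g hgz
    apply Polynomial.Gal.galActionHom_injective f ℂ
    rw [map_one]
    exact Equiv.ext fun z => hgz z
  -- the Frobenius property
  have hfrob : ∀ g : f.Gal, g ≠ 1 → ∀ x y : f.rootSet ℂ, g • x = x → g • y = y → x = y :=
    frobenius_key hfaith htrans hp (by rw [Nat.card_eq_fintype_card, h1])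
  -- complex conjugation
  set c : f.Gal := Polynomial.Gal.restrict f ℂ (Complex.conjAe.restrictScalars ℚ) with hc
  have hcact : ∀ z : f.rootSet ℂ, ((c • z : f.rootSet ℂ) : ℂ) = starRingEnd ℂ (z : ℂ) := by
    intro z
    exact Polynomial.Gal.restrict_smul _ z
  have hcne : c ≠ 1 := by
    intro h
    have := hcact ⟨x₀, hx₀⟩
    rw [h, one_smul] at this
    have him := congrArg Complex.im this
    simp [Complex.conj_im] at him
    exact hx₀im (by linarith [him])
  -- real root exists since p is odd
  have hodd : Odd p := hp.odd_of_ne_two (by omega)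
  have key := Polynomial.Gal.card_complex_roots_eq_card_real_add_card_not_gal_inv f
  simp_rw [Set.toFinset_card] at key
  have heven : 2 ∣ (Polynomial.Gal.galActionHom f ℂ (Polynomial.Gal.restrict f ℂ
      (Complex.conjAe.restrictScalars ℚ))).support.card := by
    apply Equiv.Perm.two_dvd_card_support
    rw [← MonoidHom.map_pow, ← MonoidHom.map_pow,
      show AlgEquiv.restrictScalars ℚ Complex.conjAe ^ 2 = 1 from
        AlgEquiv.ext Complex.conj_conj,
      MonoidHom.map_one, MonoidHom.map_one]
  have hRpos : 0 < Fintype.card (f.rootSet ℝ) := by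
    rcases heven with ⟨j, hj⟩
    rcases hodd with ⟨i, hi⟩
    rw [h1] at key
    omega
  obtain ⟨r⟩ := Fintype.card_pos_iff.mp hRpos
  -- embed the real root into the complex roots
  have hmem : ∀ s : f.rootSet ℝ, (algebraMap ℝ ℂ) (s : ℝ) ∈ f.rootSet ℂ := by
    intro s
    have hs : (aeval (s : ℝ)) f = 0 := (mem_rootSet.mp s.2).2
    rw [mem_rootSet]
    refine ⟨hf0, ?_⟩
    rw [show (algebraMap ℝ ℂ) (s : ℝ) = (IsScalarTower.toAlgHom ℚ ℝ ℂ) (s : ℝ) from rfl,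
      Polynomial.aeval_algHom_apply, hs, map_zero]
  have hcfix : ∀ s : f.rootSet ℝ,
      c • (⟨(algebraMap ℝ ℂ) (s : ℝ), hmem s⟩ : f.rootSet ℂ) = ⟨(algebraMap ℝ ℂ) (s : ℝ), hmem s⟩ := by
    intro s
    apply Subtype.ext
    rw [hcact]
    exact Complex.conj_ofReal _
  refine ⟨?_, htrans, ⟨⟨(algebraMap ℝ ℂ) (r : ℝ), hmem r⟩, c, hcne, hcfix r⟩, hfrob⟩
  -- exactly one real root
  rw [Fintype.card_eq_one_iff]
  refine ⟨r, fun s => ?_⟩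
  have := hfrob c hcne _ _ (hcfix s) (hcfix r)
  have h2 : (algebraMap ℝ ℂ) (s : ℝ) = (algebraMap ℝ ℂ) (r : ℝ) := by
    simpa [Subtype.ext_iff] using this
  exact Subtype.ext ((algebraMap ℝ ℂ).injective h2)
end

section
/- Let G be a group acting faithfully and transitively on a finite set Ω of prime cardinality p ≥ 5, with |G| > p. Then G has a unique Sylow p-subgroup if and only if G is a solvable group. -/
section Aux

variable {G : Type*} [Group G] {Ω : Type*} [Fintype Ω] [MulAction G Ω] [FaithfulSMul G Ω]

/-- An element centralizing a transitive subgroup and fixing a point is trivial. -/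
lemma aux_eq_one_of_fix (N : Subgroup G) (hN : MulAction.IsPretransitive N Ω)
    (x : G) (hx : ∀ n ∈ N, x * n = n * x) (ω₀ : Ω) (hfix : x • ω₀ = ω₀) : x = 1 := by
  refine eq_of_smul_eq_smul (α := Ω) fun ω => ?_
  obtain ⟨n, hn⟩ := hN.exists_smul_eq ω₀ ω
  have hns : (n : G) • ω₀ = ω := hn
  rw [one_smul, ← hns, ← mul_smul, hx n n.2, mul_smul, hfix]

/-- A nontrivial normal subgroup of a transitive group of prime degree is transitive. -/
lemma aux_pretransitive [MulAction.IsPretransitive G Ω]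
    (hcard : (Fintype.card Ω).Prime) (N : Subgroup G) [N.Normal] (hN : N ≠ ⊥) :
    MulAction.IsPretransitive N Ω := by
  obtain ⟨⟨n₀, hn₀N⟩, hn₀⟩ := Subgroup.ne_bot_iff_exists_ne_one.mp hN
  have hn₀' : n₀ ≠ 1 := by simpa [Subtype.ext_iff] using hn₀
  have hmoved : ¬ ∀ ω : Ω, n₀ • ω = ω := by
    intro h
    exact hn₀' (eq_of_smul_eq_smul (α := Ω) (fun ω => by rw [h, one_smul]))
  push_neg at hmoved
  obtain ⟨ω₀, hω₀⟩ := hmoved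
  set B : Set Ω := MulAction.orbit N ω₀ with hBdef
  have hblock : MulAction.IsBlock G B := MulAction.IsBlock.orbit_of_normal ω₀
  have hne : B.Nonempty := ⟨ω₀, MulAction.mem_orbit_self ω₀⟩
  have hdvd : B.ncard ∣ Nat.card Ω := hblock.ncard_dvd_card hne
  have hmem : n₀ • ω₀ ∈ B := by
    have := MulAction.mem_orbit ω₀ (⟨n₀, hn₀N⟩ : N)
    simpa using this
  have h2 : 1 < B.ncard :=
    (Set.one_lt_ncard (Set.toFinite B)).mpr
      ⟨n₀ • ω₀, hmem, ω₀, MulAction.mem_orbit_self ω₀, hω₀⟩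
  have hcardΩ : Nat.card Ω = Fintype.card Ω := Nat.card_eq_fintype_card
  have hBcard : B.ncard = Fintype.card Ω := by
    rcases hcard.eq_one_or_self_of_dvd _ (hcardΩ ▸ hdvd) with h | h
    · omega
    · exact h
  have hBuniv : B = Set.univ := by
    apply Set.eq_of_subset_of_ncard_le (Set.subset_univ B)
    rw [Set.ncard_univ, hcardΩ, hBcard]
  constructor
  intro x y
  have hx : x ∈ B := hBuniv ▸ Set.mem_univ x
  have hy : y ∈ B := hBuniv ▸ Set.mem_univ y
  obtain ⟨a, ha⟩ := MulAction.mem_orbit_iff.mp hx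
  obtain ⟨b, hb⟩ := MulAction.mem_orbit_iff.mp hy
  refine ⟨b * a⁻¹, ?_⟩
  rw [mul_smul, ← ha, inv_smul_smul, hb]

/-- An abelian transitive subgroup is regular, hence has the same cardinality as the set. -/
lemma aux_card [Nonempty Ω] (N : Subgroup G) (hab : ∀ a ∈ N, ∀ b ∈ N, a * b = b * a)
    (hN : MulAction.IsPretransitive N Ω) : Nat.card N = Nat.card Ω := by
  obtain ⟨ω₀⟩ := ‹Nonempty Ω›
  have hstab : MulAction.stabilizer N ω₀ = ⊥ := by
    rw [eq_bot_iff]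
    intro n hn
    have hfix : (n : G) • ω₀ = ω₀ := hn
    have h1 : (n : G) = 1 :=
      aux_eq_one_of_fix N hN n (fun m hm => hab _ n.2 _ hm) ω₀ hfix
    rw [Subgroup.mem_bot]
    exact Subtype.ext (by simp [h1])
  haveI := hN
  have h := MulAction.index_stabilizer_of_transitive (↥N) ω₀
  rwa [hstab, Subgroup.index_bot] at h

/-- Any Sylow `p`-subgroup of a transitive group of prime degree `p` has cardinality `p`. -/
lemma aux_sylow_card [Fintype G] [MulAction.IsPretransitive G Ω] {p : ℕ} [hp : Fact p.Prime]
    (hΩ : Fintype.card Ω = p) (P : Sylow p G) : Nat.card (P : Subgroup G) = p := by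
  classical
  haveI : Nonempty Ω := Fintype.card_pos_iff.mp (by rw [hΩ]; exact hp.out.pos)
  obtain ⟨ω₀⟩ := ‹Nonempty Ω›
  have hdvd1 : p ∣ Nat.card G := by
    have h := MulAction.index_stabilizer_of_transitive G ω₀
    rw [Nat.card_eq_fintype_card (α := Ω), hΩ] at h
    exact h ▸ Subgroup.index_dvd_card _
  have hdvd2 : Nat.card G ∣ p.factorial := by
    have h : Nat.card G ∣ Nat.card (Equiv.Perm Ω) :=
      Subgroup.card_dvd_of_injective (MulAction.toPermHom G Ω)
        (MulAction.toPerm_injective (α := G) (β := Ω))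
    rwa [Nat.card_eq_fintype_card (α := Equiv.Perm Ω), Fintype.card_perm, hΩ] at h
  have hnot : ¬ p ^ 2 ∣ Nat.card G := by
    intro h
    have h1 : p ^ 2 ∣ p.factorial := h.trans hdvd2
    have h2 : p.factorial = p * (p - 1).factorial :=
      (Nat.mul_factorial_pred hp.out.ne_zero).symm
    rw [h2, pow_two] at h1
    have h3 : p ∣ (p - 1).factorial := (Nat.mul_dvd_mul_iff_left hp.out.pos).mp h1
    have h4 : p ≤ p - 1 := (Nat.Prime.dvd_factorial hp.out).mp h3
    have := hp.out.two_le
    omega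
  have hgpos : Nat.card G ≠ 0 := Nat.card_pos.ne'
  have hfact : (Nat.card G).factorization p = 1 := by
    have hle : (Nat.card G).factorization p ≤ 1 := by
      by_contra hlt
      push_neg at hlt
      exact hnot ((Nat.Prime.pow_dvd_iff_le_factorization hp.out hgpos).mpr hlt)
    have hge : 1 ≤ (Nat.card G).factorization p :=
      (Nat.Prime.dvd_iff_one_le_factorization hp.out hgpos).mp hdvd1
    omega
  have := Sylow.card_eq_multiplicity P
  rw [hfact, pow_one] at this
  exact this

/-- The automorphism group of a cyclic group is commutative. -/
lemma aux_mulAut_comm {H : Type*} [Group H] [IsCyclic H] (a b : MulAut H) : a * b = b * a := by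
  obtain ⟨g, hg⟩ := IsCyclic.exists_generator (α := H)
  ext x
  obtain ⟨m, hm⟩ := hg x
  obtain ⟨i, hi⟩ := hg (a g)
  obtain ⟨j, hj⟩ := hg (b g)
  have key : ∀ (c d : MulAut H) (k l : ℤ), g ^ k = c g → g ^ l = d g →
      c (d (g ^ m)) = g ^ (k * l * m) := by
    intro c d k l hc hd
    rw [map_zpow, ← hd, ← zpow_mul, map_zpow, ← hc, ← zpow_mul, ← mul_assoc]
  have h1 := key a b i j hi hj
  have h2 := key b a j i hj hi
  rw [← hm]
  show a (b (g ^ m)) = b (a (g ^ m))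
  rw [h1, h2, mul_comm i j]

end Aux

/-- Let `G` act faithfully and transitively on a finite set `Ω` of prime cardinality
`p ≥ 5`, with `|G| > p`. Then `G` has a unique Sylow `p`-subgroup if and only if `G` is
solvable. -/
theorem unique_sylow_iff_solvable_of_prime_degree
    (G : Type*) [Group G] [Fintype G] (Ω : Type*) [Fintype Ω]
    [MulAction G Ω] [FaithfulSMul G Ω] (htrans : MulAction.IsPretransitive G Ω)
    (p : ℕ) (hp : p.Prime) (hp5 : 5 ≤ p) (hΩ : Fintype.card Ω = p)
    (hG : p < Fintype.card G) :
    (∀ P Q : Sylow p G, P = Q) ↔ IsSolvable G := by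
  haveI hpfact : Fact p.Prime := ⟨hp⟩
  haveI := htrans
  have hcardΩ : (Fintype.card Ω).Prime := hΩ ▸ hp
  haveI : Nonempty Ω := Fintype.card_pos_iff.mp (by rw [hΩ]; omega)
  constructor
  · -- unique Sylow implies solvable
    intro h
    obtain ⟨P⟩ : Nonempty (Sylow p G) := inferInstance
    haveI hPnormal : (P : Subgroup G).Normal := by
      rw [← Subgroup.normalizer_eq_top_iff, eq_top_iff]
      intro g _
      exact Sylow.smul_eq_iff_mem_normalizer.mp (h (g • P) P)
    have hcardP : Nat.card (P : Subgroup G) = p := aux_sylow_card hΩ P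
    haveI : IsCyclic (P : Subgroup G) := isCyclic_of_prime_card hcardP
    letI : CommGroup (P : Subgroup G) := IsCyclic.commGroup
    have habel : ∀ a ∈ (P : Subgroup G), ∀ b ∈ (P : Subgroup G), a * b = b * a := by
      intro a ha b hb
      exact Subtype.ext_iff.mp (mul_comm (⟨a, ha⟩ : (P : Subgroup G)) ⟨b, hb⟩)
    have hPne : (P : Subgroup G) ≠ ⊥ := by
      intro hbot
      rw [hbot, Subgroup.card_bot] at hcardP
      omega
    haveI hPtrans : MulAction.IsPretransitive (P : Subgroup G) Ω :=
      aux_pretransitive hcardΩ _ hPne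
    haveI : IsSolvable (P : Subgroup G) := isSolvable_of_comm mul_comm
    haveI : IsSolvable (MulAut (P : Subgroup G)) := isSolvable_of_comm aux_mulAut_comm
    apply solvable_of_ker_le_range (hG'' := isSolvable_of_comm aux_mulAut_comm) ((P : Subgroup G).subtype)
      (MulAut.conjNormal (H := (P : Subgroup G)))
    intro x hx
    rw [Subgroup.range_subtype]
    have h1 : (MulAut.conjNormal x : MulAut (P : Subgroup G)) = 1 := hx
    have hxc : ∀ n ∈ (P : Subgroup G), x * n = n * x := by
      intro n hn
      have h2 := MulAut.conjNormal_apply x (⟨n, hn⟩ : (P : Subgroup G))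
      rw [h1] at h2
      simp only [MulAut.one_apply] at h2
      calc x * n = (x * n * x⁻¹) * x := by group
        _ = n * x := by rw [← h2]
    obtain ⟨ω₀⟩ := ‹Nonempty Ω›
    obtain ⟨nn, hnn⟩ := hPtrans.exists_smul_eq ω₀ (x • ω₀)
    have hns : (nn : G) • ω₀ = x • ω₀ := hnn
    have hc : ((nn : G)⁻¹ * x) = 1 := by
      apply aux_eq_one_of_fix (P : Subgroup G) hPtrans _ ?_ ω₀ ?_
      · intro m hm
        have c1 : Commute x m := hxc m hm
        have c2 : Commute (nn : G) m := habel _ nn.2 _ hm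
        exact (Commute.mul_left c2.inv_left c1).eq
      · rw [mul_smul, ← hns, inv_smul_smul]
    have hxeq : (nn : G) = x := inv_mul_eq_one.mp hc
    rw [← hxeq]
    exact nn.2
  · -- solvable implies unique Sylow
    intro hsol
    classical
    have hnt : Nontrivial G := Fintype.one_lt_card_iff_nontrivial.mp (by omega)
    have hex : ∃ n, derivedSeries G n = ⊥ := hsol.solvable
    set k := Nat.find hex with hkdef
    have hkspec : derivedSeries G k = ⊥ := Nat.find_spec hex
    have hk0 : k ≠ 0 := by
      intro h0
      rw [h0] at hkspec
      exact top_ne_bot hkspec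
    set N := derivedSeries G (k - 1) with hNdef
    have hNne : N ≠ ⊥ := Nat.find_min hex (by omega)
    have hNcomm : ⁅N, N⁆ = ⊥ := by
      have h1 : derivedSeries G (k - 1 + 1) = ⁅N, N⁆ := rfl
      have h2 : k - 1 + 1 = k := by omega
      rw [← h1, h2]
      exact hkspec
    haveI hNnormal : N.Normal := derivedSeries_normal G (k - 1)
    have habel : ∀ a ∈ N, ∀ b ∈ N, a * b = b * a := by
      intro a ha b hb
      open scoped commutatorElement in
      have h1 : ⁅a, b⁆ ∈ ⁅N, N⁆ := Subgroup.commutator_mem_commutator ha hb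
      rw [hNcomm, Subgroup.mem_bot] at h1
      exact (commutatorElement_eq_one_iff_commute.mp h1).eq
    haveI hNtrans : MulAction.IsPretransitive N Ω := aux_pretransitive hcardΩ N hNne
    have hNcard : Nat.card N = p := by
      rw [aux_card N habel hNtrans, Nat.card_eq_fintype_card, hΩ]
    have hNpgroup : IsPGroup p N := IsPGroup.of_card (by rw [hNcard, pow_one])
    obtain ⟨P, hle⟩ := hNpgroup.exists_le_sylow
    have hPcard : Nat.card (P : Subgroup G) = p := aux_sylow_card hΩ P
    have hNP : N = (P : Subgroup G) :=
      Subgroup.eq_of_le_of_card_ge hle (by rw [hNcard, hPcard])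
    haveI hPnormal : (P : Subgroup G).Normal := hNP ▸ hNnormal
    intro P1 P2
    obtain ⟨g1, hg1⟩ := MulAction.exists_smul_eq G P P1
    obtain ⟨g2, hg2⟩ := MulAction.exists_smul_eq G P P2
    rw [← hg1, ← hg2, Sylow.smul_eq_of_normal, Sylow.smul_eq_of_normal]
end

section
/- Let G be a group acting faithfully and transitively on a finite set Ω of prime cardinality p ≥ 5, with |G| > p. Then G is solvable if and only if G is a Frobenius group on Ω, i.e., some point stabilizer is nontrivial and every non-identity element of G fixes at most one point of Ω. -/
open MulAction Subgroup

section FrobAux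

variable {G : Type*} [Group G] {Ω : Type*} [Fintype Ω] [MulAction G Ω] [FaithfulSMul G Ω]

private lemma frob_pow_smul_fix {g : G} {γ : Ω} (h : g • γ = γ) : ∀ k : ℕ, g ^ k • γ = γ
  | 0 => by simp
  | k + 1 => by rw [pow_succ, mul_smul, h, frob_pow_smul_fix h k]

/-- An element fixing a point and commuting with a transitively-acting subgroup is trivial. -/
private lemma frob_central_eq_one {α : Ω} {c : G} (hc : c • α = α) (N : Subgroup G)
    (hcomm : ∀ n ∈ N, c * n = n * c) (htr : ∀ β : Ω, ∃ n ∈ N, n • α = β) : c = 1 := by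
  apply eq_of_smul_eq_smul (α := Ω)
  intro ω
  obtain ⟨n, hn, rfl⟩ := htr ω
  rw [one_smul, smul_smul, hcomm n hn, ← smul_smul, hc]

private lemma frob_exists_moved {n : G} (hn : n ≠ 1) : ∃ a : Ω, n • a ≠ a := by
  by_contra h
  push_neg at h
  exact hn (eq_of_smul_eq_smul fun a => by rw [h a, one_smul])

/-- A nontrivial normal subgroup of a transitive group of prime degree is transitive. -/
private lemma frob_normal_trans (htrans : IsPretransitive G Ω) {p : ℕ} (hp : p.Prime)
    (hΩ : Fintype.card Ω = p) (N : Subgroup G) [N.Normal] (hN : N ≠ ⊥) :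
    ∀ α β : Ω, ∃ n ∈ N, n • α = β := by
  haveI := htrans
  obtain ⟨⟨n, hnN⟩, hn1⟩ := Subgroup.ne_bot_iff_exists_ne_one.mp hN
  have hn1' : n ≠ 1 := by simpa [Subtype.ext_iff] using hn1
  obtain ⟨a, ha⟩ := frob_exists_moved (Ω := Ω) hn1'
  have hblock : IsBlock G (orbit N a) := IsBlock.orbit_of_normal a
  have h2 : 1 < (orbit N a).ncard := by
    rw [Set.one_lt_ncard_iff (Set.toFinite _)]
    exact ⟨n • a, a, ⟨⟨n, hnN⟩, rfl⟩, mem_orbit_self a, ha⟩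
  have hdvd : (orbit N a).ncard ∣ p := by
    have := hblock.ncard_dvd_card ⟨a, mem_orbit_self a⟩
    rwa [Nat.card_eq_fintype_card, hΩ] at this
  have hcards : (orbit N a).ncard = p :=
    (hp.eq_one_or_self_of_dvd _ hdvd).resolve_left (by omega)
  have huniv : orbit N a = Set.univ := by
    apply Set.eq_of_subset_of_ncard_le (Set.subset_univ _)
    rw [Set.ncard_univ, Nat.card_eq_fintype_card, hΩ, hcards]
  intro α β
  have hα : α ∈ orbit N a := huniv ▸ Set.mem_univ α
  have hβ : β ∈ orbit N a := huniv ▸ Set.mem_univ β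
  obtain ⟨⟨m₁, hm₁⟩, rfl⟩ := hα
  obtain ⟨⟨m₂, hm₂⟩, rfl⟩ := hβ
  refine ⟨m₂ * m₁⁻¹, N.mul_mem hm₂ (N.inv_mem hm₁), ?_⟩
  show (m₂ * m₁⁻¹) • (m₁ • a) = m₂ • a
  rw [smul_smul, inv_mul_cancel_right]

/-- If an element of order `p` fixes a point under a coprime power, it fixes the point. -/
private lemma frob_fix_of_pow_fix {p : ℕ} (hp : p.Prime) {y : G} (hy : orderOf y = p)
    {γ : Ω} {d : ℕ} (hd : ¬ p ∣ d) (hfix : y ^ d • γ = γ) : y • γ = γ := by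
  have hcop : Nat.Coprime d p := (Nat.coprime_comm.mp ((hp.coprime_iff_not_dvd).mpr hd))
  obtain ⟨e, -, he⟩ := Nat.exists_mul_mod_eq_one_of_coprime hcop hp.one_lt
  have hkey : (y ^ d) ^ e = y := by
    rw [← pow_mul, ← pow_mod_orderOf, hy, he, pow_one]
  calc y • γ = (y ^ d) ^ e • γ := by rw [hkey]
  _ = γ := frob_pow_smul_fix hfix e

/-- In degree `p`, an element of order `p` has no fixed point. -/
private lemma frob_order_p_no_fix {p : ℕ} (hp : p.Prime) (hΩ : Fintype.card Ω = p)
    {y : G} (hy : orderOf y = p) {α : Ω} (hfix : y • α = α) : False := by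
  classical
  have hy1 : y ≠ 1 := by
    intro h
    rw [h, orderOf_one] at hy
    exact hp.ne_one hy.symm
  obtain ⟨β, hβ⟩ := frob_exists_moved (Ω := Ω) hy1
  set f : Fin p → Ω := fun i => y ^ (i : ℕ) • β with hf
  have hkey : ∀ i j : Fin p, (i : ℕ) ≤ (j : ℕ) → f i = f j → i = j := by
    intro i j hle hij
    by_contra hne
    have hne' : (i : ℕ) ≠ (j : ℕ) := fun h => hne (Fin.ext h)
    have hlt : (i : ℕ) < (j : ℕ) := lt_of_le_of_ne hle hne'
    have hdfix : y ^ ((j : ℕ) - i) • (y ^ (i : ℕ) • β) = y ^ (i : ℕ) • β := by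
      rw [smul_smul, ← pow_add, Nat.sub_add_cancel hle]
      exact hij.symm
    have hnd : ¬ p ∣ ((j : ℕ) - i) := by
      intro hdvd
      have hj := j.isLt
      have := Nat.le_of_dvd (by omega) hdvd
      omega
    have h1 := frob_fix_of_pow_fix hp hy hnd hdfix
    -- y fixes y^i • β, hence y fixes β
    have h2 : y ^ (i : ℕ) • (y • β) = y ^ (i : ℕ) • β := by
      rw [smul_smul, ← pow_succ, pow_succ', mul_smul]
      exact h1
    exact hβ (MulAction.injective (y ^ (i : ℕ)) h2)
  have hinj : Function.Injective f := by
    intro i j hij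
    rcases le_total (i : ℕ) (j : ℕ) with h | h
    · exact hkey i j h hij
    · exact (hkey j i h hij.symm).symm
  have hα_not : ∀ i : Fin p, f i ≠ α := by
    intro i h
    have hfixi : y ^ (i : ℕ) • α = α := frob_pow_smul_fix hfix i
    have hβα : β = α := by
      calc β = (y ^ (i : ℕ))⁻¹ • (y ^ (i : ℕ) • β) := (inv_smul_smul _ _).symm
      _ = (y ^ (i : ℕ))⁻¹ • α := by rw [show y ^ (i : ℕ) • β = α from h]
      _ = (y ^ (i : ℕ))⁻¹ • (y ^ (i : ℕ) • α) := by rw [hfixi]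
      _ = α := inv_smul_smul _ _
    rw [hβα] at hβ
    exact hβ hfix
  have hcard : (Finset.univ.image f).card = p := by
    rw [Finset.card_image_of_injective _ hinj, Finset.card_univ, Fintype.card_fin]
  have hαnm : α ∉ Finset.univ.image f := by
    simp only [Finset.mem_image, Finset.mem_univ, true_and, not_exists]
    exact fun i h => hα_not i h
  have : p + 1 ≤ Fintype.card Ω := by
    calc p + 1 = (insert α (Finset.univ.image f)).card := by
          rw [Finset.card_insert_of_notMem hαnm, hcard]
    _ ≤ Fintype.card Ω := Finset.card_le_univ _
  omega

end FrobAux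

private lemma frob_mulAut_comm {H : Type*} [Group H] [IsCyclic H] (σ τ : MulAut H) :
    σ * τ = τ * σ := by
  obtain ⟨g, hg⟩ := IsCyclic.exists_generator (α := H)
  obtain ⟨a, ha⟩ := Subgroup.mem_zpowers_iff.mp (hg (σ g))
  obtain ⟨b, hb⟩ := Subgroup.mem_zpowers_iff.mp (hg (τ g))
  have key : σ (τ g) = τ (σ g) := by
    rw [← hb, ← ha, map_zpow, map_zpow, ← ha, ← hb, ← zpow_mul, ← zpow_mul, Int.mul_comm]
  ext x
  obtain ⟨i, rfl⟩ := Subgroup.mem_zpowers_iff.mp (hg x)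
  calc (σ * τ) (g ^ i) = (σ (τ g)) ^ i := by rw [MulAut.mul_apply, map_zpow, map_zpow]
  _ = (τ (σ g)) ^ i := by rw [key]
  _ = (τ * σ) (g ^ i) := by rw [MulAut.mul_apply, map_zpow, map_zpow]

section Main

variable {G : Type*} [Group G] [Fintype G] {Ω : Type*} [Fintype Ω]
  [MulAction G Ω] [FaithfulSMul G Ω]

private lemma frob_forward (htrans : IsPretransitive G Ω) {p : ℕ} (hp : p.Prime)
    (hΩ : Fintype.card Ω = p) (hG : p < Fintype.card G) (hsolv : IsSolvable G) :
    (∃ (α : Ω) (g : G), g ≠ 1 ∧ g • α = α) ∧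
      ∀ g : G, g ≠ 1 → ∀ α β : Ω, g • α = α → g • β = β → α = β := by
  classical
  haveI := htrans
  haveI : Nonempty Ω := Fintype.card_pos_iff.mp (by rw [hΩ]; exact hp.pos)
  obtain ⟨α₀⟩ := ‹Nonempty Ω›
  constructor
  · -- nontrivial stabilizer
    by_contra hcon
    push_neg at hcon
    have hinj : Function.Injective (fun g : G => g • α₀) := by
      intro g g' h
      simp only at h
      have hfix : (g'⁻¹ * g) • α₀ = α₀ := by rw [mul_smul, h, inv_smul_smul]
      rcases eq_or_ne (g'⁻¹ * g) 1 with h1 | h1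
      · exact (inv_mul_eq_one.mp h1).symm
      · exact absurd hfix (hcon α₀ (g'⁻¹ * g) h1)
    have := Fintype.card_le_of_injective _ hinj
    rw [hΩ] at this
    omega
  · -- at most one fixed point
    obtain ⟨nn, hnn⟩ := hsolv.solvable
    have hex : ∃ k : ℕ, derivedSeries G k = ⊥ := ⟨nn, hnn⟩
    have hmspec : derivedSeries G (Nat.find hex) = ⊥ := Nat.find_spec hex
    have hm0 : Nat.find hex ≠ 0 := by
      intro h0
      rw [h0, derivedSeries_zero] at hmspec
      obtain ⟨g, hg⟩ := Fintype.exists_ne_of_one_lt_card (by have := hp.pos; omega : 1 < Fintype.card G) (1 : G)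
      have : g ∈ (⊥ : Subgroup G) := hmspec ▸ mem_top g
      exact hg (mem_bot.mp this)
    set N : Subgroup G := derivedSeries G (Nat.find hex - 1) with hNdef
    haveI hNnormal : N.Normal := derivedSeries_normal G _
    have hNbot : N ≠ ⊥ := Nat.find_min hex (by omega)
    have hcomm : ∀ x ∈ N, ∀ y ∈ N, x * y = y * x := by
      have hab : ⁅N, N⁆ = ⊥ := by
        rw [hNdef, ← derivedSeries_succ, Nat.sub_add_cancel (by omega), hmspec]
      intro x hx y hy
      have h1 : N ≤ Subgroup.centralizer (N : Set G) :=
        Subgroup.commutator_eq_bot_iff_le_centralizer.mp hab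
      exact (Subgroup.mem_centralizer_iff.mp (h1 hx) y hy).symm
    have htrN := frob_normal_trans htrans hp hΩ N hNbot
    have hsemi : ∀ n ∈ N, ∀ α : Ω, n • α = α → n = 1 := by
      intro n hn α hfix
      exact frob_central_eq_one hfix N (fun m hm => hcomm n hn m hm) (htrN α)
    have hbij : Function.Bijective (fun x : ↥N => (x : G) • α₀) := by
      constructor
      · intro x x' hxx
        simp only at hxx
        have hfix : ((x' : G)⁻¹ * x) • α₀ = α₀ := by rw [mul_smul, hxx, inv_smul_smul]
        have h1 := hsemi _ (N.mul_mem (N.inv_mem x'.2) x.2) α₀ hfix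
        exact Subtype.ext (inv_mul_eq_one.mp h1).symm
      · intro β
        obtain ⟨nβ, hnβ, hsm⟩ := htrN α₀ β
        exact ⟨⟨nβ, hnβ⟩, hsm⟩
    have hNcard : Fintype.card ↥N = p := by
      rw [Fintype.card_of_bijective hbij, hΩ]
    intro g hg α β hα hβ
    by_contra hne
    obtain ⟨n, hnN, hnαβ⟩ := htrN α β
    have hn1 : n ≠ 1 := by
      rintro rfl
      rw [one_smul] at hnαβ
      exact hne hnαβ
    have hgi : g⁻¹ • α = α := by rw [inv_smul_eq_iff, hα]
    have hconj : g * n * g⁻¹ ∈ N := hNnormal.conj_mem n hnN g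
    have hfix2 : (n⁻¹ * (g * n * g⁻¹)) • α = α := by
      simp only [mul_smul]
      rw [hgi, hnαβ, hβ, ← hnαβ, inv_smul_smul]
    have hmul : n⁻¹ * (g * n * g⁻¹) = 1 :=
      hsemi _ (N.mul_mem (N.inv_mem hnN) hconj) α hfix2
    have h2 : n = g * n * g⁻¹ := inv_mul_eq_one.mp hmul
    have hcommgn : Commute g n := by
      show g * n = n * g
      conv_rhs => rw [h2]
      group
    have hordn : orderOf (⟨n, hnN⟩ : ↥N) = p := by
      have hdvd : orderOf (⟨n, hnN⟩ : ↥N) ∣ p := hNcard ▸ orderOf_dvd_card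
      rcases hp.eq_one_or_self_of_dvd _ hdvd with h | h
      · exact absurd (congrArg Subtype.val (orderOf_eq_one_iff.mp h)) hn1
      · exact h
    have hzp : zpowers (⟨n, hnN⟩ : ↥N) = ⊤ := by
      apply Subgroup.eq_top_of_card_eq
      rw [Nat.card_zpowers, hordn, Nat.card_eq_fintype_card, hNcard]
    have hcent : ∀ x ∈ N, g * x = x * g := by
      intro x hx
      have hmem : (⟨x, hx⟩ : ↥N) ∈ zpowers (⟨n, hnN⟩ : ↥N) := hzp ▸ mem_top _
      obtain ⟨i, hi⟩ := hmem
      have hx' : n ^ i = x := by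
        have := congrArg Subtype.val hi
        simpa using this
      rw [← hx']
      exact (hcommgn.zpow_right i).eq
    exact hg (frob_central_eq_one hα N hcent (htrN α))

private lemma frob_converse (htrans : IsPretransitive G Ω) {p : ℕ} (hp : p.Prime)
    (hΩ : Fintype.card Ω = p)
    (hfrob : ∀ g : G, g ≠ 1 → ∀ α β : Ω, g • α = α → g • β = β → α = β) :
    IsSolvable G := by
  classical
  haveI := htrans
  haveI := Fact.mk hp
  haveI : Nonempty Ω := Fintype.card_pos_iff.mp (by rw [hΩ]; exact hp.pos)
  obtain ⟨α₀⟩ := ‹Nonempty Ω›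
  have hstab : ∀ α : Ω, p * Nat.card (stabilizer G α) = Nat.card G := by
    intro α
    calc p * Nat.card (stabilizer G α)
        = (stabilizer G α).index * Nat.card (stabilizer G α) := by
          rw [index_stabilizer_of_transitive, Nat.card_eq_fintype_card (α := Ω), hΩ]
    _ = Nat.card G := Subgroup.index_mul_card _
  set h : ℕ := Nat.card (stabilizer G α₀) with hhdef
  have hcardG : Nat.card G = p * h := (hstab α₀).symm
  have hstab' : ∀ α : Ω, Nat.card (stabilizer G α) = h :=
    fun α => Nat.eq_of_mul_eq_mul_left hp.pos ((hstab α).trans hcardG)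
  have hh1 : 1 ≤ h := Nat.card_pos
  set S : Finset G := Finset.univ.filter (fun g => g ≠ 1 ∧ ∃ α : Ω, g • α = α) with hSdef
  have hstabcard : ∀ α : Ω, (Finset.univ.filter (fun g : G => g • α = α)).card = h := by
    intro α
    calc (Finset.univ.filter (fun g : G => g • α = α)).card
        = Fintype.card {g : G // g • α = α} := (Fintype.card_subtype _).symm
    _ = Fintype.card (stabilizer G α) :=
        Fintype.card_congr (Equiv.subtypeEquivRight (fun g => mem_stabilizer_iff.symm))
    _ = h := by rw [← Nat.card_eq_fintype_card, hstab' α]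
  have hScard : S.card = p * (h - 1) := by
    have hSeq : S = Finset.univ.biUnion
        (fun α : Ω => (Finset.univ.filter (fun g : G => g • α = α)).erase 1) := by
      ext g
      simp only [hSdef, Finset.mem_filter, Finset.mem_univ, true_and, Finset.mem_biUnion,
        Finset.mem_erase]
      tauto
    rw [hSeq, Finset.card_biUnion]
    · have heach : ∀ α : Ω,
          ((Finset.univ.filter (fun g : G => g • α = α)).erase 1).card = h - 1 := by
        intro α
        rw [Finset.card_erase_of_mem (by simp), hstabcard α]
      rw [Finset.sum_congr rfl (fun α _ => heach α), Finset.sum_const, Finset.card_univ, hΩ,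
        smul_eq_mul]
    · intro α _ β _ hne
      rw [Function.onFun, Finset.disjoint_left]
      intro g hgα hgβ
      simp only [Finset.mem_erase, Finset.mem_filter, Finset.mem_univ, true_and] at hgα hgβ
      exact hne (hfrob g hgα.1 α β hgα.2 hgβ.2)
  have hKcard : (Finset.univ \ S).card = p := by
    rw [Finset.card_sdiff_of_subset (Finset.subset_univ S), Finset.card_univ,
      ← Nat.card_eq_fintype_card, hcardG, hScard]
    have hsum : p * (h - 1) + p = p * h := by
      rw [← Nat.mul_succ]
      congr 1
      omega
    omega
  obtain ⟨P⟩ : Nonempty (Sylow p G) := inferInstance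
  have hpdvd : p ∣ Nat.card G := Dvd.intro h hcardG.symm
  have hPcard : Nat.card ↥(P : Subgroup G) = p ^ (Nat.card G).factorization p :=
    P.card_eq_multiplicity
  have hk1 : 0 < (Nat.card G).factorization p :=
    hp.factorization_pos_of_dvd Nat.card_pos.ne' hpdvd
  have hpP : p ≤ Nat.card ↥(P : Subgroup G) := by
    rw [hPcard]
    exact Nat.le_self_pow (by omega) p
  have hPfree : ∀ x : G, x ∈ (P : Subgroup G) → x ≠ 1 → ∀ α : Ω, x • α ≠ α := by
    intro x hx hx1 α hfix
    obtain ⟨k, hk⟩ := P.isPGroup' ⟨x, hx⟩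
    have hxpk : x ^ (p ^ k) = 1 := by
      have := congrArg Subtype.val hk
      simpa using this
    have hdvd : orderOf x ∣ p ^ k := orderOf_dvd_of_pow_eq_one hxpk
    obtain ⟨j, hjle, hj⟩ := (Nat.dvd_prime_pow hp).mp hdvd
    have hj0 : j ≠ 0 := by
      rintro rfl
      rw [pow_zero] at hj
      exact hx1 (orderOf_eq_one_iff.mp hj)
    have hexp : p ^ (j - 1) * p = p ^ j := by
      rw [← pow_succ]
      congr 1
      omega
    have h1 : (x ^ (p ^ (j - 1))) ^ p = 1 := by
      rw [← pow_mul, hexp, ← hj]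
      exact pow_orderOf_eq_one x
    have h2 : x ^ (p ^ (j - 1)) ≠ 1 := by
      rw [Ne, ← orderOf_dvd_iff_pow_eq_one, hj]
      intro hd
      have := (Nat.pow_dvd_pow_iff_le_right hp.one_lt).mp hd
      omega
    have hyp : orderOf (x ^ (p ^ (j - 1))) = p := by
      rcases hp.eq_one_or_self_of_dvd _ (orderOf_dvd_of_pow_eq_one h1) with hq | hq
      · exact absurd (orderOf_eq_one_iff.mp hq) h2
      · exact hq
    exact frob_order_p_no_fix hp hΩ hyp (frob_pow_smul_fix hfix _)
  set PF : Finset G := Set.toFinset ((P : Subgroup G) : Set G) with hPFdef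
  have hPFsub : PF ⊆ Finset.univ \ S := by
    intro x hxPF
    rw [Finset.mem_sdiff]
    refine ⟨Finset.mem_univ x, ?_⟩
    simp only [hSdef, Finset.mem_filter, Finset.mem_univ, true_and, not_and, not_exists]
    intro hx1 α
    exact hPfree x (Set.mem_toFinset.mp hxPF) hx1 α
  have hPFcard : PF.card = Nat.card ↥(P : Subgroup G) := by
    rw [hPFdef, Set.toFinset_card, Nat.card_eq_fintype_card]
    rfl
  have hPFK : PF = Finset.univ \ S :=
    Finset.eq_of_subset_of_card_le hPFsub (by rw [hKcard, hPFcard]; exact hpP)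
  have hmemP : ∀ x : G, x ∈ (P : Subgroup G) ↔ (x = 1 ∨ ∀ α : Ω, x • α ≠ α) := by
    intro x
    constructor
    · intro hx
      rcases eq_or_ne x 1 with rfl | hx1
      · exact Or.inl rfl
      · exact Or.inr (hPfree x hx hx1)
    · intro hx
      have hxPF : x ∈ PF := by
        rw [hPFK, Finset.mem_sdiff]
        refine ⟨Finset.mem_univ _, ?_⟩
        simp only [hSdef, Finset.mem_filter, Finset.mem_univ, true_and, not_and, not_exists]
        intro hx1 α
        rcases hx with rfl | hx
        · exact absurd rfl hx1
        · exact hx α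
      exact Set.mem_toFinset.mp hxPF
  haveI hPnormal : (P : Subgroup G).Normal := by
    constructor
    intro x hx g
    rw [hmemP] at hx ⊢
    rcases hx with rfl | hx
    · left; simp
    · right
      intro α hfix
      apply hx (g⁻¹ • α)
      have hrw : x • (g⁻¹ • α) = g⁻¹ • ((g * x * g⁻¹) • α) := by
        simp only [mul_smul, inv_smul_smul]
      rw [hrw, hfix]
  have hPcard' : Nat.card ↥(P : Subgroup G) = p := by
    have := hPFcard
    rw [hPFK, hKcard] at this
    exact this.symm
  have hPtrans : ∀ α β : Ω, ∃ n ∈ (P : Subgroup G), n • α = β := by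
    intro α
    have hinjP : Function.Injective (fun x : ↥(P : Subgroup G) => (x : G) • α) := by
      intro x x' hxx
      simp only at hxx
      have hfix : ((x' : G)⁻¹ * x) • α = α := by rw [mul_smul, hxx, inv_smul_smul]
      have hmem : ((x' : G)⁻¹ * (x : G)) ∈ (P : Subgroup G) :=
        mul_mem (inv_mem x'.2) x.2
      rcases eq_or_ne ((x' : G)⁻¹ * x) 1 with h1 | h1
      · exact Subtype.ext (inv_mul_eq_one.mp h1).symm
      · exact absurd hfix (hPfree _ hmem h1 α)
    have hcards : Fintype.card ↥(P : Subgroup G) = Fintype.card Ω := by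
      rw [hΩ, ← Nat.card_eq_fintype_card, hPcard']
    have hbijP : Function.Bijective (fun x : ↥(P : Subgroup G) => (x : G) • α) :=
      (Fintype.bijective_iff_injective_and_card _).mpr ⟨hinjP, hcards⟩
    intro β
    obtain ⟨x, hx⟩ := hbijP.2 β
    exact ⟨x, x.2, hx⟩
  have hcentP : ∀ c : G, (∀ x ∈ (P : Subgroup G), c * x = x * c) → c ∈ (P : Subgroup G) := by
    intro c hc
    rw [hmemP]
    by_cases hc1 : c = 1
    · exact Or.inl hc1
    · right
      intro α hfix
      exact hc1 (frob_central_eq_one hfix (P : Subgroup G) hc (hPtrans α))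
  have hker : (MulAut.conjNormal : G →* MulAut ↥(P : Subgroup G)).ker ≤
      ((P : Subgroup G).subtype).range := by
    rw [Subgroup.range_subtype]
    intro g hg
    apply hcentP
    intro x hx
    have hone := MonoidHom.mem_ker.mp hg
    have h2 : (MulAut.conjNormal g) ⟨x, hx⟩ = ⟨x, hx⟩ := by rw [hone]; rfl
    have h3 : g * x * g⁻¹ = x := by
      have := congrArg Subtype.val h2
      rwa [MulAut.conjNormal_apply] at this
    calc g * x = (g * x * g⁻¹) * g := by group
    _ = x * g := by rw [h3]
  haveI : IsCyclic ↥(P : Subgroup G) := isCyclic_of_prime_card hPcard'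
  haveI : Group.IsSolvable ↥(P : Subgroup G) := by
    letI := IsCyclic.commGroup (α := ↥(P : Subgroup G))
    exact inferInstance
  haveI : Group.IsSolvable (MulAut ↥(P : Subgroup G)) := isSolvable_of_comm frob_mulAut_comm
  exact solvable_of_ker_le_range ((P : Subgroup G).subtype) MulAut.conjNormal hker

end Main

/-- Let `G` act faithfully and transitively on a finite set `Ω` of prime cardinality
`p ≥ 5`, with `|G| > p`. Then `G` is solvable if and only if `G` is a Frobenius group
on `Ω`: some point stabilizer is nontrivial and every non-identity element of `G`
fixes at most one point of `Ω`. -/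
theorem solvable_iff_frobenius_of_prime_degree
    (G : Type*) [Group G] [Fintype G] (Ω : Type*) [Fintype Ω]
    [MulAction G Ω] [FaithfulSMul G Ω] (htrans : MulAction.IsPretransitive G Ω)
    (p : ℕ) (hp : p.Prime) (hp5 : 5 ≤ p) (hΩ : Fintype.card Ω = p)
    (hG : p < Fintype.card G) :
    IsSolvable G ↔
      ((∃ (α : Ω) (g : G), g ≠ 1 ∧ g • α = α) ∧
        ∀ g : G, g ≠ 1 → ∀ α β : Ω, g • α = α → g • β = β → α = β) := by
  constructor
  · intro hsolv
    exact frob_forward htrans hp hΩ hG hsolv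
  · rintro ⟨_, hfrob⟩
    exact frob_converse htrans hp hΩ hfrob
end

section
/- Let G be a group acting faithfully and transitively on a finite set Ω of prime cardinality p ≥ 5, with |G| > p. Then G is solvable if and only if there is an injective group homomorphism from G into the one-dimensional affine group AGL₁(p), realized as the semidirect product of the additive group ℤ/pℤ by its unit group (ℤ/pℤ)ˣ acting by multiplication. -/
/-- The action of the unit group `(ℤ/pℤ)ˣ` on the additive group `ℤ/pℤ` (written
multiplicatively) by multiplication. The corresponding semidirect product
`Multiplicative (ZMod p) ⋊[zmodMulAut p] (ZMod p)ˣ` is the one-dimensional affine group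
`AGL₁(p)`. -/
def zmodMulAut (p : ℕ) : (ZMod p)ˣ →* MulAut (Multiplicative (ZMod p)) where
  toFun u := AddEquiv.toMultiplicative (DistribMulAction.toAddAut (ZMod p)ˣ (ZMod p) u)
  map_one' := by ext x; exact congrArg Multiplicative.ofAdd (one_smul (ZMod p)ˣ x.toAdd)
  map_mul' u v := by ext x; exact congrArg Multiplicative.ofAdd (mul_smul u v x.toAdd)

theorem key {G : Type*} [Group G] {Ω : Type*} [MulAction G Ω] [FaithfulSMul G Ω]
    (p : ℕ) (N : Subgroup G) [N.Normal] (ψ : Multiplicative (ZMod p) ≃* N)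
    (ω₀ : Ω) (hbij : Function.Bijective (fun n : N => (n : G) • ω₀)) :
    ∃ φ : G →* Multiplicative (ZMod p) ⋊[zmodMulAut p] (ZMod p)ˣ,
      Function.Injective φ := by
  classical
  set e : N ≃ Ω := Equiv.ofBijective _ hbij with he
  -- coordinate map
  set χ : Ω → ZMod p := fun x => Multiplicative.toAdd (ψ.symm (e.symm x)) with hχ
  have hχinj : Function.Injective χ := fun x y h => by
    have := ψ.symm.injective (Multiplicative.toAdd.injective h)
    exact e.symm.injective this
  have hee : ∀ n : N, (n : G) • ω₀ = e n := fun n => rfl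
  have fact1 : ∀ (n : N) (x : Ω), χ ((n : G) • x) = Multiplicative.toAdd (ψ.symm n) + χ x := by
    intro n x
    have hx : ((e.symm x : N) : G) • ω₀ = x := e.apply_symm_apply x
    have h2 : (n : G) • x = e (n * e.symm x) := by
      conv_lhs => rw [← hx]
      rw [← hee, Subgroup.coe_mul, mul_smul]
    rw [h2]
    show Multiplicative.toAdd (ψ.symm (e.symm (e (n * e.symm x)))) = _
    rw [e.symm_apply_apply, map_mul]
    rfl
  -- the multiplier
  have hval : ∀ (f : ZMod p ≃+ ZMod p) (x : ZMod p), f x = f 1 * x := by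
    intro f x
    rw [mul_comm, ← x.intCast_zmod_cast, ← zsmul_eq_mul, ← map_zsmul, zsmul_one]
  set A : G → (ZMod p ≃+ ZMod p) := fun g =>
    AddEquiv.toMultiplicative.symm (ψ.trans (((MulAut.conjNormal g : MulAut N) : N ≃* N).trans ψ.symm)) with hA
  set a : G → (ZMod p)ˣ := fun g => ZMod.AddAutEquivUnits p (A g) with ha
  have haval : ∀ g : G, ((a g : (ZMod p)ˣ) : ZMod p) = A g 1 := fun g => rfl
  have hAapp : ∀ (g : G) (n : N),
      Multiplicative.toAdd (ψ.symm (MulAut.conjNormal g n)) = A g (Multiplicative.toAdd (ψ.symm n)) := by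
    intro g n
    simp [hA, AddEquiv.toMultiplicative]
  have hAmul : ∀ (g : G) (x : ZMod p), A g x = (a g : ZMod p) * x := by
    intro g x; rw [haval, ← hval]
  have main : ∀ (g : G) (x : Ω), χ (g • x) = (a g : ZMod p) * χ x + χ (g • ω₀) := by
    intro g x
    have hx : ((e.symm x : N) : G) • ω₀ = x := e.apply_symm_apply x
    set n : N := e.symm x with hn
    have h1 : g • x = ((MulAut.conjNormal g n : N) : G) • (g • ω₀) := by
      conv_lhs => rw [← hx]
      rw [MulAut.conjNormal_apply, smul_smul, smul_smul]
      congr 1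
      group
    rw [h1, fact1, hAapp, hAmul]
  -- A is multiplicative
  have hamul : ∀ g h : G, (a (g * h) : ZMod p) = (a g : ZMod p) * (a h : ZMod p) := by
    intro g h
    have h1 : ∀ (k : G) (x : ZMod p), A k x = Multiplicative.toAdd (ψ.symm (MulAut.conjNormal k (ψ (Multiplicative.ofAdd x)))) := by
      intro k x
      rw [hAapp]
      simp
    have : A (g * h) 1 = A g (A h 1) := by
      rw [h1, h1, h1, map_mul]
      simp [MulAut.mul_apply]
    rw [haval, haval, haval] at *
    rw [this, hval]
  refine ⟨{ toFun := fun g => ⟨Multiplicative.ofAdd (χ (g • ω₀)), a g⟩, map_one' := ?_, map_mul' := ?_ }, ?_⟩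
  · have h0 : χ ω₀ = 0 := by
      have : ((1 : N) : G) • ω₀ = e 1 := hee 1
      have he1 : e.symm ω₀ = 1 := by
        rw [← e.symm_apply_apply 1, ← this]; simp
      simp [hχ, he1]
    show (⟨Multiplicative.ofAdd (χ ((1 : G) • ω₀)), a 1⟩ :
        Multiplicative (ZMod p) ⋊[zmodMulAut p] (ZMod p)ˣ) = ⟨1, 1⟩
    simp only [SemidirectProduct.ext_iff]
    constructor
    · rw [one_smul, h0]; rfl
    · refine Units.ext ?_
      have hA1 : A 1 1 = (1 : ZMod p) := by
        rw [hA]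
        simp [AddEquiv.toMultiplicative]
      rw [haval]
      exact hA1
  · intro g h
    rw [SemidirectProduct.mul_def]
    simp only [SemidirectProduct.ext_iff]
    constructor
    · show Multiplicative.ofAdd (χ ((g * h) • ω₀)) = Multiplicative.ofAdd (χ (g • ω₀)) * (zmodMulAut p (a g) (Multiplicative.ofAdd (χ (h • ω₀))))
      have hms : (g * h) • ω₀ = g • (h • ω₀) := mul_smul g h ω₀
      rw [hms, main g (h • ω₀)]
      simp only [zmodMulAut]
      show Multiplicative.ofAdd ((a g : ZMod p) * χ (h • ω₀) + χ (g • ω₀)) =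
        Multiplicative.ofAdd (χ (g • ω₀) + (a g) • χ (h • ω₀))
      rw [Units.smul_def, smul_eq_mul, add_comm]
    · exact Units.ext (hamul g h)
  · intro g h hgh
    have hleft : χ (g • ω₀) = χ (h • ω₀) := by
      have := congrArg SemidirectProduct.left hgh
      simpa using this
    have hright : (a g : ZMod p) = (a h : ZMod p) := by
      have := congrArg SemidirectProduct.right hgh
      simpa [Units.ext_iff] using this
    have : ∀ x : Ω, g • x = h • x := by
      intro x
      apply hχinj
      rw [main g x, main h x, hleft, hright]
    exact eq_of_smul_eq_smul this

/-- Let `G` act faithfully and transitively on a finite set `Ω` of prime cardinality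
`p ≥ 5`, with `|G| > p`. Then `G` is solvable if and only if `G` embeds into the
one-dimensional affine group `AGL₁(p) = (ℤ/pℤ) ⋊ (ℤ/pℤ)ˣ`. -/
theorem solvable_iff_embeds_in_AGL1_of_prime_degree
    (G : Type*) [Group G] [Fintype G] (Ω : Type*) [Fintype Ω]
    [MulAction G Ω] [FaithfulSMul G Ω] (htrans : MulAction.IsPretransitive G Ω)
    (p : ℕ) (hp : p.Prime) (hp5 : 5 ≤ p) (hΩ : Fintype.card Ω = p)
    (hG : p < Fintype.card G) :
    IsSolvable G ↔
      ∃ φ : G →* Multiplicative (ZMod p) ⋊[zmodMulAut p] (ZMod p)ˣ,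
        Function.Injective φ := by
  classical
  haveI : Fact p.Prime := ⟨hp⟩
  haveI := htrans
  constructor
  · intro hs
    haveI : Nontrivial G := Fintype.one_lt_card_iff_nontrivial.mp (by omega)
    obtain ⟨n, hn⟩ := hs.solvable
    have hex : ∃ k, derivedSeries G k = ⊥ := ⟨n, hn⟩
    set k := Nat.find hex with hkdef
    have hk : derivedSeries G k = ⊥ := Nat.find_spec hex
    have hk0 : k ≠ 0 := by
      intro h
      rw [h] at hk
      obtain ⟨g, hg⟩ := exists_ne (1 : G)
      exact hg (Subgroup.mem_bot.mp (hk ▸ Subgroup.mem_top g))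
    set N : Subgroup G := derivedSeries G (k - 1) with hNdef
    haveI : N.Normal := derivedSeries_normal G _
    have hNne : N ≠ ⊥ := Nat.find_min hex (by omega)
    have hcm : ⁅N, N⁆ = ⊥ := by
      have hk1 : k - 1 + 1 = k := Nat.succ_pred_eq_of_pos (Nat.pos_of_ne_zero hk0)
      rw [hNdef, ← derivedSeries_succ, hk1]
      exact hk
    have hcomm : ∀ x y : N, (x : G) * y = (y : G) * x := by
      intro x y
      have hmem : @Bracket.bracket G G commutatorElement (x : G) (y : G) ∈ ⁅N, N⁆ :=
        Subgroup.commutator_mem_commutator x.2 y.2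
      rw [hcm, Subgroup.mem_bot, commutatorElement_eq_one_iff_mul_comm] at hmem
      exact hmem
    -- a point moved by some nontrivial element of N
    obtain ⟨n0, hn0⟩ := Subgroup.ne_bot_iff_exists_ne_one.mp hNne
    have hmoved : ∃ a : Ω, (n0 : G) • a ≠ a := by
      by_contra h
      push_neg at h
      have : (n0 : G) = 1 := eq_of_smul_eq_smul (fun x : Ω => by rw [h x, one_smul])
      exact hn0 (by ext; simp [this])
    obtain ⟨a, ha⟩ := hmoved
    set B : Set Ω := MulAction.orbit N a with hBdef
    have hB : MulAction.IsBlock G B := MulAction.IsBlock.orbit_of_normal a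
    have hBne : B.Nonempty := ⟨a, MulAction.mem_orbit_self a⟩
    have hdvd : B.ncard ∣ p := by
      have := hB.ncard_dvd_card hBne
      rwa [Nat.card_eq_fintype_card, hΩ] at this
    have h2le : 2 ≤ B.ncard := by
      have hnt : B.Nontrivial := ⟨(n0 : G) • a, ⟨n0, rfl⟩, a, MulAction.mem_orbit_self a, ha⟩
      have := (Set.one_lt_ncard (Set.toFinite B)).mpr
        ⟨(n0 : G) • a, ⟨n0, rfl⟩, a, MulAction.mem_orbit_self a, ha⟩
      omega
    have hBcard : B.ncard = p := by
      rcases (Nat.Prime.eq_one_or_self_of_dvd hp _ hdvd) with h | h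
      · omega
      · exact h
    have hBuniv : B = Set.univ := by
      apply Set.eq_of_subset_of_ncard_le (Set.subset_univ B)
      rw [Set.ncard_univ, Nat.card_eq_fintype_card, hΩ, hBcard]
    -- regularity of N at a
    have hsurj : Function.Surjective (fun m : N => (m : G) • a) := by
      intro x
      have hx : x ∈ B := hBuniv ▸ Set.mem_univ x
      obtain ⟨m, hm⟩ := hx
      exact ⟨m, hm⟩
    have hinj : Function.Injective (fun m : N => (m : G) • a) := by
      intro m m' (h : (m : G) • a = (m' : G) • a)
      have hd : ((m'⁻¹ * m : N) : G) • a = a := by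
        rw [Subgroup.coe_mul, mul_smul, h, ← mul_smul, ← Subgroup.coe_mul,
          inv_mul_cancel, Subgroup.coe_one, one_smul]
      have htriv : ((m'⁻¹ * m : N) : G) = 1 := by
        apply eq_of_smul_eq_smul (α := Ω)
        intro x
        obtain ⟨c, rfl⟩ := hsurj x
        show ((m'⁻¹ * m : N) : G) • ((c : G) • a) = 1 • ((c : G) • a)
        rw [one_smul, ← mul_smul, ← Subgroup.coe_mul, Subgroup.coe_mul,
          hcomm (m'⁻¹ * m) c, mul_smul, hd]
      have h1 : (m'⁻¹ * m : N) = 1 := by ext; simp [htriv]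
      exact (inv_mul_eq_one.mp h1).symm
    have hcardN : Nat.card N = p := by
      rw [Nat.card_congr (Equiv.ofBijective _ ⟨hinj, hsurj⟩), Nat.card_eq_fintype_card, hΩ]
    haveI : IsCyclic N := isCyclic_of_prime_card hcardN
    have ψ : Multiplicative (ZMod p) ≃* N := hcardN ▸ zmodCyclicMulEquiv inferInstance
    exact key p N ψ a ⟨hinj, hsurj⟩
  · rintro ⟨φ, hφ⟩
    haveI : IsSolvable (Multiplicative (ZMod p) ⋊[zmodMulAut p] (ZMod p)ˣ) := by
      apply solvable_of_ker_le_range (SemidirectProduct.inl (φ := zmodMulAut p))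
        SemidirectProduct.rightHom
      rw [← SemidirectProduct.range_inl_eq_ker_rightHom]
    exact @solvable_of_solvable_injective _ _ _ _ _ hφ this
end

section
/- (Burnside) Let G be a group acting faithfully and transitively on a finite set Ω of prime cardinality p. If G is not solvable, then the action of G on Ω is 2-transitive, i.e., G acts transitively on the set of ordered pairs of distinct elements of Ω. -/
set_option maxHeartbeats 1000000
set_option synthInstance.maxHeartbeats 400000

namespace BurnsideAux

open Finset Module Submodule

variable (p : ℕ) [Fact p.Prime]

abbrev V := ZMod p → ZMod p

/-- the monomial function `x ↦ x^i` -/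
def mon (i : ℕ) : V p := fun x => x ^ i

/-- polynomial functions of degree `< m` -/
def B (m : ℕ) : Submodule (ZMod p) (V p) :=
  Submodule.span (ZMod p) (mon p '' Set.Iio m)

lemma mon_mem_B {i m : ℕ} (h : i < m) : mon p i ∈ B p m :=
  Submodule.subset_span ⟨i, h, rfl⟩

lemma B_mono {m n : ℕ} (h : m ≤ n) : B p m ≤ B p n :=
  Submodule.span_mono (Set.image_mono (Set.Iio_subset_Iio h))

lemma B_zero : B p 0 = ⊥ := by
  simp [B, Set.Iio_eq_empty_iff.mpr]

lemma monLI : LinearIndependent (ZMod p) (fun i : Fin p => mon p (i : ℕ)) := by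
  have hp2 : 2 ≤ p := (Fact.out : p.Prime).two_le
  rw [Fintype.linearIndependent_iff]
  intro g hg i
  set q : Polynomial (ZMod p) := ∑ i : Fin p, Polynomial.C (g i) * Polynomial.X ^ (i : ℕ) with hq
  have hdeg : q.natDegree < p := by
    have : q.natDegree ≤ p - 1 := by
      apply Polynomial.natDegree_sum_le_of_forall_le
      intro i _
      exact (Polynomial.natDegree_C_mul_X_pow_le (g i) (i : ℕ)).trans (by omega)
    omega
  have heval : ∀ x : ZMod p, q.eval x = 0 := by
    intro x
    have := congrFun hg x
    simp only [Finset.sum_apply, Pi.smul_apply, Pi.zero_apply, smul_eq_mul] at this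
    simpa [hq, Polynomial.eval_finset_sum, mon] using this
  have hq0 : q = 0 := by
    apply Polynomial.eq_zero_of_natDegree_lt_card_of_eval_eq_zero q Function.injective_id
      (fun x => heval x)
    simpa [ZMod.card] using hdeg
  have := congrArg (fun r => Polynomial.coeff r (i : ℕ)) hq0
  simp only [hq, Polynomial.finset_sum_coeff, Polynomial.coeff_C_mul, Polynomial.coeff_X_pow,
    Polynomial.coeff_zero] at this
  rwa [Finset.sum_eq_single i (by
      intro j _ hj
      have : (j : ℕ) ≠ (i : ℕ) := fun h => hj (Fin.ext h)
      simp [this, Ne.symm this]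
    ) (by simp), if_pos rfl, mul_one] at this

lemma B_eq_span_range (m : ℕ) :
    B p m = Submodule.span (ZMod p) (Set.range (fun i : Fin m => mon p (i : ℕ))) := by
  unfold B
  congr 1
  ext f
  constructor
  · rintro ⟨i, hi, rfl⟩; exact ⟨⟨i, hi⟩, rfl⟩
  · rintro ⟨i, rfl⟩; exact ⟨(i : ℕ), i.2, rfl⟩

lemma finrank_B {m : ℕ} (hm : m ≤ p) : finrank (ZMod p) (B p m) = m := by
  rw [B_eq_span_range]
  have li : LinearIndependent (ZMod p) (fun i : Fin m => mon p (i : ℕ)) := by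
    have := (monLI p).comp (Fin.castLE hm) (Fin.castLE_injective hm)
    exact this
  rw [finrank_span_eq_card li, Fintype.card_fin]

lemma finrank_V : finrank (ZMod p) (V p) = p := by
  simp [Module.finrank_pi, ZMod.card]

lemma B_top : B p p = ⊤ := by
  have h1 : finrank (ZMod p) (B p p) = p := finrank_B p le_rfl
  apply Submodule.eq_top_of_finrank_eq
  rw [h1, finrank_V]


/-- the difference operator -/
def Dl : V p →ₗ[ZMod p] V p where
  toFun f := fun x => f (x + 1) - f x
  map_add' f g := by funext x; simp; ring
  map_smul' c f := by funext x; simp [mul_sub]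

lemma Dl_apply (f : V p) (x : ZMod p) : Dl p f x = f (x + 1) - f x := rfl

lemma Dl_mon_zero : Dl p (mon p 0) = 0 := by
  funext x; simp [Dl_apply, mon]

lemma Dl_mon_succ (i : ℕ) :
    Dl p (mon p (i + 1)) - ((i : ZMod p) + 1) • mon p i ∈ B p i := by
  have key : Dl p (mon p (i + 1)) - ((i : ZMod p) + 1) • mon p i
      = ∑ j ∈ Finset.range i, ((i + 1).choose j : ZMod p) • mon p j := by
    funext x
    simp only [Pi.sub_apply, Dl_apply, mon, Pi.smul_apply, smul_eq_mul, Finset.sum_apply]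
    have hx : (x + 1) ^ (i + 1) = ∑ k ∈ Finset.range (i + 2), x ^ k * 1 ^ (i + 1 - k) *
        ((i + 1).choose k : ZMod p) := add_pow x 1 (i + 1)
    rw [hx, Finset.sum_range_succ, Finset.sum_range_succ]
    simp only [one_pow, mul_one, Nat.choose_self, Nat.cast_one, Nat.choose_succ_self_right]
    push_cast
    have hc : ∑ x_1 ∈ range i, x ^ x_1 * ((i + 1).choose x_1 : ZMod p)
        = ∑ x_1 ∈ range i, ((i + 1).choose x_1 : ZMod p) * x ^ x_1 :=
      Finset.sum_congr rfl fun j _ => mul_comm _ _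
    rw [← hc]
    ring
  rw [key]
  exact Submodule.sum_mem _ (fun j hj => Submodule.smul_mem _ _
    (mon_mem_B p (Finset.mem_range.mp hj)))

lemma Dl_map_B (m : ℕ) : Submodule.map (Dl p) (B p (m + 1)) ≤ B p m := by
  rw [B, Submodule.map_span, Submodule.span_le]
  rintro f ⟨g, ⟨i, hi, rfl⟩, rfl⟩
  have hi' : i < m + 1 := hi
  clear hi
  rcases i with _ | j
  · rw [Dl_mon_zero]; exact Submodule.zero_mem _
  · have hj : j < m := by omega
    have h1 := Dl_mon_succ p j
    have : Dl p (mon p (j + 1)) =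
        (Dl p (mon p (j + 1)) - ((j : ZMod p) + 1) • mon p j) + ((j : ZMod p) + 1) • mon p j := by
      ring
    rw [this]
    exact Submodule.add_mem _ (B_mono p (by omega) h1)
      (Submodule.smul_mem _ _ (mon_mem_B p hj))

lemma Dl_mem_B {m : ℕ} {f : V p} (hf : f ∈ B p (m + 1)) : Dl p f ∈ B p m :=
  Dl_map_B p m ⟨f, hf, rfl⟩

lemma B_le_ker (m : ℕ) : B p m ≤ LinearMap.ker ((Dl p) ^ m) := by
  induction m with
  | zero => rw [B_zero]; exact bot_le
  | succ n ih =>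
    intro f hf
    rw [LinearMap.mem_ker, pow_succ, Module.End.mul_apply]
    exact LinearMap.mem_ker.mp (ih (Dl_mem_B p hf))

lemma natCast_ne_zero_zmod {k : ℕ} (h0 : 0 < k) (hk : k < p) : (k : ZMod p) ≠ 0 := by
  rw [Ne, ZMod.natCast_eq_zero_iff]
  exact fun hdvd => absurd (Nat.le_of_dvd h0 hdvd) (by omega)

lemma sur (m : ℕ) (hm : m + 1 ≤ p) : B p m ≤ Submodule.map (Dl p) (B p (m + 1)) := by
  induction m with
  | zero => rw [B_zero]; exact bot_le
  | succ n ih =>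
    have hn : n + 1 ≤ p := by omega
    rw [B, Submodule.span_le]
    rintro f ⟨i, hi, rfl⟩
    have hi' : i < n + 1 := hi
    clear hi
    have hsub : Submodule.map (Dl p) (B p (n + 1)) ≤ Submodule.map (Dl p) (B p (n + 2)) :=
      Submodule.map_mono (B_mono p (by omega))
    rcases Nat.lt_or_ge i n with h | h
    · exact hsub (ih hn (mon_mem_B p h))
    · have hin : i = n := by omega
      subst hin
      have h1 := Dl_mon_succ p i
      have h2 : ((i : ZMod p) + 1) • mon p i
          = Dl p (mon p (i + 1)) - (Dl p (mon p (i + 1)) - ((i : ZMod p) + 1) • mon p i) := by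
        ring
      have h3 : ((i : ZMod p) + 1) • mon p i ∈ Submodule.map (Dl p) (B p (i + 2)) := by
        rw [h2]
        apply Submodule.sub_mem
        · exact ⟨mon p (i + 1), mon_mem_B p (by omega), rfl⟩
        · exact hsub (ih hn h1)
      have hc : ((i : ZMod p) + 1) ≠ 0 := by
        have : ((i + 1 : ℕ) : ZMod p) ≠ 0 := natCast_ne_zero_zmod p (by omega) (by omega)
        push_cast at this
        exact this
      have := Submodule.smul_mem _ ((i : ZMod p) + 1)⁻¹ h3
      rwa [inv_smul_smul₀ hc] at this

lemma map_top (m : ℕ) (hm : m ≤ p) : B p (p - m) ≤ Submodule.map ((Dl p) ^ m) ⊤ := by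
  induction m with
  | zero =>
    intro f _; exact ⟨f, trivial, by simp⟩
  | succ n ih =>
    have h1 : p - (n + 1) + 1 = p - n := by omega
    have h2 : B p (p - (n + 1)) ≤ Submodule.map (Dl p) (B p (p - n)) := by
      rw [← h1]; exact sur p _ (by omega)
    calc B p (p - (n + 1)) ≤ Submodule.map (Dl p) (B p (p - n)) := h2
      _ ≤ Submodule.map (Dl p) (Submodule.map ((Dl p) ^ n) ⊤) :=
          Submodule.map_mono (ih (by omega))
      _ = Submodule.map ((Dl p) ^ (n + 1)) ⊤ := by
          rw [← Submodule.map_comp, ← Module.End.mul_eq_comp, ← pow_succ']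

lemma ker_Dl_pow (m : ℕ) (hm : m ≤ p) : LinearMap.ker ((Dl p) ^ m) = B p m := by
  have h1 : finrank (ZMod p) (LinearMap.ker ((Dl p) ^ m)) ≤ m := by
    have hrn := LinearMap.finrank_range_add_finrank_ker ((Dl p) ^ m)
    rw [finrank_V] at hrn
    have h2 : p - m ≤ finrank (ZMod p) (LinearMap.range ((Dl p) ^ m)) := by
      rw [LinearMap.range_eq_map]
      calc p - m = finrank (ZMod p) (B p (p - m)) := (finrank_B p (by omega)).symm
        _ ≤ _ := Submodule.finrank_mono (map_top p m hm)
    omega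
  symm
  apply Submodule.eq_of_le_of_finrank_le (B_le_ker p m)
  rw [finrank_B p hm]
  exact h1

lemma Dl_pow_p : (Dl p) ^ p = 0 := by
  rw [← LinearMap.ker_eq_top, ker_Dl_pow p p le_rfl, B_top]

theorem chain (W : Submodule (ZMod p) (V p)) (hW : ∀ f ∈ W, Dl p f ∈ W) :
    ∃ m ≤ p, W = B p m := by
  have hWn : ∀ (n : ℕ), ∀ f ∈ W, ((Dl p) ^ n) f ∈ W := by
    intro n
    induction n with
    | zero => intro f hf; simpa using hf
    | succ k ih =>
      intro f hf
      rw [pow_succ', Module.End.mul_apply]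
      exact hW _ (ih f hf)
  have hP : ∃ n, ∀ f ∈ W, ((Dl p) ^ n) f = 0 := ⟨p, fun f _ => by rw [Dl_pow_p]; rfl⟩
  classical
  set n₀ := Nat.find hP with hn₀
  have hspec : ∀ f ∈ W, ((Dl p) ^ n₀) f = 0 := Nat.find_spec hP
  have hn₀p : n₀ ≤ p := Nat.find_min' hP (fun f _ => by rw [Dl_pow_p]; rfl)
  rcases Nat.eq_zero_or_pos n₀ with h0 | hpos
  · refine ⟨0, by omega, ?_⟩
    rw [B_zero, Submodule.eq_bot_iff]
    intro f hf
    have := hspec f hf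
    rwa [h0, pow_zero] at this
  · obtain ⟨k, hk⟩ : ∃ k, n₀ = k + 1 := ⟨n₀ - 1, by omega⟩
    have hmin : ¬ (∀ f ∈ W, ((Dl p) ^ k) f = 0) := Nat.find_min hP (by omega)
    push_neg at hmin
    obtain ⟨w, hw, hwk⟩ := hmin
    -- the iterates of w are linearly independent
    have hkill : ∀ (e : ℕ), k + 1 ≤ e → ((Dl p) ^ e) w = 0 := by
      intro e he
      have : (Dl p) ^ e = (Dl p) ^ (e - (k + 1)) * (Dl p) ^ (k + 1) := by
        rw [← pow_add]; congr 1; omega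
      rw [this, Module.End.mul_apply, ← hk, hspec w hw, map_zero]
    have li : LinearIndependent (ZMod p) (fun j : Fin (k + 1) => ((Dl p) ^ (j : ℕ)) w) := by
      rw [Fintype.linearIndependent_iff]
      intro c hc
      have key : ∀ n, ∀ j : Fin (k + 1), (j : ℕ) = n → c j = 0 := by
        intro n
        induction n using Nat.strong_induction_on with
        | _ n IH =>
          intro j hj
          have hnk : n ≤ k := by omega
          have h2 := congrArg (((Dl p) ^ (k - n)) : V p →ₗ[ZMod p] V p) hc
          rw [map_sum, map_zero] at h2
          have h3 : ∀ j' : Fin (k + 1), j' ≠ j →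
              ((Dl p) ^ (k - n)) (c j' • ((Dl p) ^ (j' : ℕ)) w) = 0 := by
            intro j' hj'
            rw [map_smul]
            rcases Nat.lt_or_ge (j' : ℕ) n with hlt | hge
            · rw [IH _ hlt j' rfl, zero_smul]
            · have hgt : n < (j' : ℕ) := by
                rcases Nat.eq_or_lt_of_le hge with h | h
                · exact absurd (Fin.ext (h.symm.trans hj.symm)) hj'
                · exact h
              have : ((Dl p) ^ (k - n)) (((Dl p) ^ (j' : ℕ)) w) = ((Dl p) ^ (k - n + j')) w := by
                rw [pow_add, Module.End.mul_apply]
              rw [this, hkill _ (by omega), smul_zero]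
          rw [Finset.sum_eq_single j (fun j' _ hj' => h3 j' hj') (by simp)] at h2
          rw [map_smul] at h2
          have h4 : ((Dl p) ^ (k - n)) (((Dl p) ^ (j : ℕ)) w) = ((Dl p) ^ k) w := by
            rw [← Module.End.mul_apply, ← pow_add]
            congr 2
            omega
          rw [h4] at h2
          exact (smul_eq_zero.mp h2).resolve_right hwk
      exact fun j => key (j : ℕ) j rfl
    -- conclude
    have hle : W ≤ B p (k + 1) := by
      rw [← ker_Dl_pow p (k + 1) (by omega)]
      intro f hf
      rw [LinearMap.mem_ker, ← hk]
      exact hspec f hf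
    have hfr : finrank (ZMod p) (B p (k + 1)) ≤ finrank (ZMod p) W := by
      rw [finrank_B p (by omega)]
      have liW : LinearIndependent (ZMod p)
          (fun j : Fin (k + 1) => (⟨((Dl p) ^ (j : ℕ)) w, hWn _ w hw⟩ : W)) := by
        apply LinearIndependent.of_comp W.subtype
        exact li
      simpa using liW.fintype_card_le_finrank
    exact ⟨k + 1, by omega, Submodule.eq_of_le_of_finrank_le hle hfr⟩


lemma sum_pow_zmod {n : ℕ} (hn : n ≤ 2 * p - 3) (hne : n ≠ p - 1) :
    ∑ x : ZMod p, x ^ n = 0 := by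
  have hp2 : 2 ≤ p := (Fact.out : p.Prime).two_le
  have hcard : Fintype.card (ZMod p) = p := ZMod.card p
  rcases Nat.lt_or_ge n (p - 1) with h | h
  · exact FiniteField.sum_pow_lt_card_sub_one (K := ZMod p) n (by rw [ZMod.card]; omega)
  · have hnp : p ≤ n := by omega
    set m := n - (p - 1) with hm
    have hm1 : 1 ≤ m := by omega
    have hm2 : m ≤ p - 2 := by omega
    have key : ∀ x : ZMod p, x ^ n = x ^ m := by
      intro x
      rcases eq_or_ne x 0 with rfl | hx
      · rw [zero_pow (by omega), zero_pow (by omega)]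
      · have : x ^ n = x ^ m * x ^ (p - 1) := by
          rw [← pow_add]; congr 1; omega
        rw [this, ZMod.pow_card_sub_one_eq_one hx, mul_one]
    rw [Finset.sum_congr rfl (fun x _ => key x)]
    exact FiniteField.sum_pow_lt_card_sub_one (K := ZMod p) m (by rw [ZMod.card]; omega)

lemma sum_pow_pred : ∑ x : ZMod p, x ^ (p - 1) = -1 := by
  have hp2 : 2 ≤ p := (Fact.out : p.Prime).two_le
  have key : ∀ x : ZMod p, x ^ (p - 1) = if x = 0 then 0 else 1 := by
    intro x
    rcases eq_or_ne x 0 with rfl | hx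
    · rw [zero_pow (by omega), if_pos rfl]
    · rw [ZMod.pow_card_sub_one_eq_one hx, if_neg hx]
  rw [Finset.sum_congr rfl (fun x _ => key x)]
  rw [← Finset.add_sum_erase _ _ (Finset.mem_univ (0 : ZMod p))]
  rw [if_pos rfl, zero_add]
  rw [Finset.sum_congr rfl (fun x hx => if_neg (Finset.ne_of_mem_erase hx))]
  rw [Finset.sum_const, Finset.card_erase_of_mem (Finset.mem_univ _), Finset.card_univ,
    ZMod.card, nsmul_eq_mul, mul_one]
  have : ((p - 1 : ℕ) : ZMod p) = (p : ZMod p) - 1 := by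
    push_cast [Nat.cast_sub (by omega : 1 ≤ p)]; ring
  rw [this, ZMod.natCast_self, zero_sub]

/-- pairing with the monomials of degree `< s` -/
def Lmap (s : ℕ) : V p →ₗ[ZMod p] (Fin s → ZMod p) where
  toFun f := fun i => ∑ x : ZMod p, x ^ (i : ℕ) * f x
  map_add' f g := by funext i; simp [mul_add, Finset.sum_add_distrib]
  map_smul' c f := by
    funext i
    simp only [Pi.smul_apply, smul_eq_mul, RingHom.id_apply]
    rw [Finset.mul_sum]
    exact Finset.sum_congr rfl fun x _ => by ring

lemma pairing_zero {s : ℕ} {w f : V p} (hw : w ∈ B p s) (hf : f ∈ LinearMap.ker (Lmap p s)) :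
    ∑ x : ZMod p, w x * f x = 0 := by
  induction hw using Submodule.span_induction with
  | mem g hg =>
    obtain ⟨i, hi, rfl⟩ := hg
    have hi' : i < s := hi
    have := congrFun (LinearMap.mem_ker.mp hf) ⟨i, hi'⟩
    simpa [Lmap, mon] using this
  | zero => simp
  | add g h _ _ ihg ihh =>
    have he : ∀ x : ZMod p, (g + h) x * f x = g x * f x + h x * f x := fun x => by
      simp [add_mul]
    rw [Finset.sum_congr rfl fun x _ => he x, Finset.sum_add_distrib, ihg, ihh, add_zero]
  | smul c g _ ihg =>
    have he : ∀ x : ZMod p, (c • g) x * f x = c * (g x * f x) := fun x => by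
      simp [mul_assoc]
    rw [Finset.sum_congr rfl fun x _ => he x, ← Finset.mul_sum, ihg, mul_zero]

lemma B_le_ker_Lmap (s : ℕ) (hs : s ≤ p - 1) : B p (p - s) ≤ LinearMap.ker (Lmap p s) := by
  have hp2 : 2 ≤ p := (Fact.out : p.Prime).two_le
  rw [B, Submodule.span_le]
  rintro f ⟨j, hj, rfl⟩
  have hj' : j < p - s := hj
  rw [SetLike.mem_coe, LinearMap.mem_ker]
  funext i
  have hi : (i : ℕ) < s := i.2
  show (∑ x : ZMod p, x ^ (i : ℕ) * x ^ j) = 0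
  rw [Finset.sum_congr rfl (fun x _ => (pow_add x (i : ℕ) j).symm)]
  exact sum_pow_zmod p (by omega) (by omega)

lemma Lmap_surj (s : ℕ) (hs : s ≤ p - 1) : Function.Surjective (Lmap p s) := by
  have hp2 : 2 ≤ p := (Fact.out : p.Prime).two_le
  have hsingle : ∀ i₀ : Fin s, ∃ f, Lmap p s f = Pi.single i₀ 1 := by
    intro i₀
    refine ⟨-(mon p (p - 1 - (i₀ : ℕ))), ?_⟩
    funext i
    have hi : (i : ℕ) < s := i.2
    have hi₀ : (i₀ : ℕ) < s := i₀.2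
    show (∑ x : ZMod p, x ^ (i : ℕ) * (-(mon p (p - 1 - (i₀ : ℕ)))) x) = _
    have hexp : ∀ x : ZMod p, x ^ (i : ℕ) * (-(mon p (p - 1 - (i₀ : ℕ)))) x
        = -(x ^ ((i : ℕ) + (p - 1 - (i₀ : ℕ)))) := by
      intro x
      simp [mon, pow_add]
    rw [Finset.sum_congr rfl (fun x _ => hexp x), Finset.sum_neg_distrib]
    rcases eq_or_ne i i₀ with rfl | hne
    · rw [Pi.single_eq_same]
      have : (i : ℕ) + (p - 1 - (i : ℕ)) = p - 1 := by omega
      rw [this, sum_pow_pred, neg_neg]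
    · rw [Pi.single_eq_of_ne hne]
      have hnei : (i : ℕ) ≠ (i₀ : ℕ) := fun h => hne (Fin.ext h)
      rw [sum_pow_zmod p (by omega) (by omega), neg_zero]
  intro v
  have : v ∈ LinearMap.range (Lmap p s) := by
    have hv : v = ∑ i : Fin s, v i • (Pi.single i 1 : Fin s → ZMod p) := by
      funext j
      rw [Finset.sum_apply]
      rw [Finset.sum_eq_single j (fun i _ hij => by
        simp [Pi.single_eq_of_ne (Ne.symm hij)]) (by simp)]
      simp
    rw [hv]
    exact Submodule.sum_mem _ (fun i _ => Submodule.smul_mem _ _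
      ⟨(hsingle i).choose, (hsingle i).choose_spec⟩)
  exact this

lemma ker_Lmap (s : ℕ) (hs : s ≤ p - 1) : LinearMap.ker (Lmap p s) = B p (p - s) := by
  have hp2 : 2 ≤ p := (Fact.out : p.Prime).two_le
  symm
  apply Submodule.eq_of_le_of_finrank_le (B_le_ker_Lmap p s hs)
  have hrn := LinearMap.finrank_range_add_finrank_ker (Lmap p s)
  rw [finrank_V] at hrn
  have hr : finrank (ZMod p) (LinearMap.range (Lmap p s)) = s := by
    rw [LinearMap.range_eq_top.mpr (Lmap_surj p s hs), finrank_top]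
    simp [Module.finrank_pi]
  rw [finrank_B p (by omega)]
  omega

lemma B_mul (a b : ℕ) : B p (a + 1) * B p (b + 1) = B p (a + b + 1) := by
  unfold B
  rw [Submodule.span_mul_span]
  apply le_antisymm
  · rw [Submodule.span_le]
    rintro f ⟨g, ⟨i, hi, rfl⟩, h, ⟨j, hj, rfl⟩, rfl⟩
    have hi' : i < a + 1 := hi
    have hj' : j < b + 1 := hj
    show (mon p i * mon p j : V p) ∈ _
    have hmm : mon p i * mon p j = mon p (i + j) := by
      funext x; simp [mon, pow_add]
    rw [hmm]
    exact SetLike.mem_coe.mpr (Submodule.subset_span ⟨i + j, Set.mem_Iio.mpr (by omega), rfl⟩)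
  · rw [Submodule.span_le]
    rintro f ⟨c, hc, rfl⟩
    have hc' : c < a + b + 1 := hc
    have hmm : mon p c = mon p (min c a) * mon p (c - min c a) := by
      funext x
      show x ^ c = x ^ (min c a) * x ^ (c - min c a)
      rw [← pow_add]
      congr 1
      omega
    rw [hmm]
    apply SetLike.mem_coe.mpr
    apply Submodule.subset_span
    exact Set.mul_mem_mul ⟨min c a, Set.mem_Iio.mpr (by omega), rfl⟩
      ⟨c - min c a, Set.mem_Iio.mpr (by omega), rfl⟩


lemma mem_B1 {f : V p} : f ∈ B p 1 ↔ ∃ c : ZMod p, f = fun _ => c := by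
  have h1 : mon p '' Set.Iio 1 = {mon p 0} := by
    apply Set.Subset.antisymm
    · rintro g ⟨i, hi, rfl⟩
      have : i = 0 := by have : i < 1 := hi; omega
      simp [this]
    · rintro g rfl
      exact ⟨0, Set.mem_Iio.mpr one_pos, rfl⟩
  rw [B, h1, Submodule.mem_span_singleton]
  constructor
  · rintro ⟨c, rfl⟩
    exact ⟨c, by funext x; simp [mon]⟩
  · rintro ⟨c, rfl⟩
    exact ⟨c, by funext x; simp [mon]⟩

section Grp

variable {p} {G : Type*} [Group G] (ρ : G →* Equiv.Perm (ZMod p))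

/-- `W` is invariant under the (dualized) action of `G` -/
def Inv (W : Submodule (ZMod p) (V p)) : Prop :=
  ∀ (g : G), ∀ f ∈ W, (f ∘ ⇑(ρ g)⁻¹) ∈ W

lemma comp_inv_mul (g h : G) (f : V p) :
    f ∘ ⇑(ρ (g * h))⁻¹ = (f ∘ ⇑(ρ h)⁻¹) ∘ ⇑(ρ g)⁻¹ := by
  funext x
  simp [map_mul]

lemma inv_B1 : Inv ρ (B p 1) := by
  intro g f hf
  obtain ⟨c, rfl⟩ := (mem_B1 p).mp hf
  exact (mem_B1 p).mpr ⟨c, rfl⟩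

lemma inv_Dl {g₀ : G} (hσ : ∀ i, ρ g₀ i = i + 1) {W : Submodule (ZMod p) (V p)}
    (hW : Inv ρ W) : ∀ f ∈ W, Dl p f ∈ W := by
  intro f hf
  have h1 : (f ∘ ⇑(ρ g₀⁻¹)⁻¹) ∈ W := hW g₀⁻¹ f hf
  have h2 : (f ∘ ⇑(ρ g₀⁻¹)⁻¹) = fun x => f (x + 1) := by
    funext x
    simp [map_inv, hσ]
  have h3 : Dl p f = (fun x => f (x + 1)) - f := by
    funext x; simp [Dl]
  rw [h3, ← h2]
  exact Submodule.sub_mem _ h1 hf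

lemma inv_chain {g₀ : G} (hσ : ∀ i, ρ g₀ i = i + 1) {W : Submodule (ZMod p) (V p)}
    (hW : Inv ρ W) : ∃ m ≤ p, W = B p m :=
  chain p W (inv_Dl ρ hσ hW)

lemma inv_perp {s : ℕ} (hs : s ≤ p - 1) (hI : Inv ρ (B p s)) : Inv ρ (B p (p - s)) := by
  rw [← ker_Lmap p s hs]
  intro g f hf
  rw [LinearMap.mem_ker]
  funext i
  show (∑ x : ZMod p, x ^ (i : ℕ) * f ((ρ g)⁻¹ x)) = 0
  have hre : ∑ x : ZMod p, x ^ (i : ℕ) * f ((ρ g)⁻¹ x)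
      = ∑ y : ZMod p, (ρ g y) ^ (i : ℕ) * f y := by
    rw [← Equiv.sum_comp (ρ g) (fun x => x ^ (i : ℕ) * f ((ρ g)⁻¹ x))]
    exact Finset.sum_congr rfl fun y _ => by rw [Equiv.Perm.inv_def, Equiv.symm_apply_apply]
  rw [hre]
  have hmem : (mon p (i : ℕ) ∘ ⇑(ρ g⁻¹)⁻¹) ∈ B p s := hI g⁻¹ _ (mon_mem_B p i.2)
  have heq : (mon p (i : ℕ) ∘ ⇑(ρ g⁻¹)⁻¹) = fun y => (ρ g y) ^ (i : ℕ) := by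
    funext y; simp [mon, map_inv]
  rw [heq] at hmem
  exact pairing_zero p hmem hf

lemma inv_mul {W₁ W₂ : Submodule (ZMod p) (V p)} (h₁ : Inv ρ W₁) (h₂ : Inv ρ W₂) :
    Inv ρ (W₁ * W₂) := by
  intro g f hf
  refine Submodule.mul_induction_on hf (fun m hm n hn => ?_) (fun x y hx hy => ?_)
  · have he : (m * n) ∘ ⇑(ρ g)⁻¹ = (m ∘ ⇑(ρ g)⁻¹) * (n ∘ ⇑(ρ g)⁻¹) := rfl
    rw [he]
    exact Submodule.mul_mem_mul (h₁ g m hm) (h₂ g n hn)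
  · have he : (x + y) ∘ ⇑(ρ g)⁻¹ = x ∘ ⇑(ρ g)⁻¹ + y ∘ ⇑(ρ g)⁻¹ := rfl
    rw [he]
    exact Submodule.add_mem _ hx hy

end Grp

section Core
variable {p : ℕ} [Fact p.Prime] {G : Type*} [Group G]

theorem core (hp3 : 3 ≤ p) (ρ : G →* Equiv.Perm (ZMod p))
    (g₀ : G) (hσ : ∀ i, ρ g₀ i = i + 1)
    (htrans : ∀ i j : ZMod p, ∃ g, ρ g i = j)
    {x y : ZMod p} (hx : x ≠ 0) (hy : y ≠ 0)
    (hnot : ¬ ∃ h : G, ρ h 0 = 0 ∧ ρ h x = y) :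
    ∀ g : G, ∃ a b : ZMod p, a ≠ 0 ∧ ∀ z, ρ g z = a * z + b := by
  classical
  have hp2 : 2 ≤ p := by omega
  -- orbits of the stabilizer of 0 through x and y
  set Ox : Finset (ZMod p) := Finset.univ.filter (fun z => ∃ h : G, ρ h 0 = 0 ∧ ρ h x = z)
    with hOxdef
  set Oy : Finset (ZMod p) := Finset.univ.filter (fun z => ∃ h : G, ρ h 0 = 0 ∧ ρ h y = z)
    with hOydef
  have hfix_inv : ∀ {h : G}, ρ h 0 = 0 → ρ h⁻¹ 0 = 0 := by
    intro h hh
    rw [map_inv]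
    conv_lhs => rw [← hh]
    exact Equiv.symm_apply_apply _ _
  have hfix_mul : ∀ {h h' : G}, ρ h 0 = 0 → ρ h' 0 = 0 → ρ (h * h') 0 = 0 := by
    intro h h' hh hh'
    rw [map_mul, Equiv.Perm.mul_apply, hh', hh]
  have hxOx : x ∈ Ox := by
    rw [hOxdef, Finset.mem_filter]
    exact ⟨Finset.mem_univ _, 1, by simp⟩
  have hyOy : y ∈ Oy := by
    rw [hOydef, Finset.mem_filter]
    exact ⟨Finset.mem_univ _, 1, by simp⟩
  have horb : ∀ (w : ZMod p) {h : G}, ρ h 0 = 0 → ∀ z : ZMod p,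
      ((∃ h', ρ h' 0 = 0 ∧ ρ h' w = ρ h z) ↔ (∃ h', ρ h' 0 = 0 ∧ ρ h' w = z)) := by
    intro w h hh z
    constructor
    · rintro ⟨h', h0, hw⟩
      refine ⟨h⁻¹ * h', hfix_mul (hfix_inv hh) h0, ?_⟩
      rw [map_mul, Equiv.Perm.mul_apply, hw, map_inv, Equiv.Perm.inv_def, Equiv.symm_apply_apply]
    · rintro ⟨h', h0, hw⟩
      refine ⟨h * h', hfix_mul hh h0, ?_⟩
      rw [map_mul, Equiv.Perm.mul_apply, hw]
  have hmemOx : ∀ {h : G}, ρ h 0 = 0 → ∀ z : ZMod p, ((ρ h)⁻¹ z ∈ Ox ↔ z ∈ Ox) := by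
    intro h hh z
    rw [hOxdef, Finset.mem_filter, Finset.mem_filter]
    simp only [Finset.mem_univ, true_and]
    have := horb x (hfix_inv hh) z
    rwa [map_inv] at this
  have hmemOy : ∀ {h : G}, ρ h 0 = 0 → ∀ z : ZMod p, ((ρ h)⁻¹ z ∈ Oy ↔ z ∈ Oy) := by
    intro h hh z
    rw [hOydef, Finset.mem_filter, Finset.mem_filter]
    simp only [Finset.mem_univ, true_and]
    have := horb y (hfix_inv hh) z
    rwa [map_inv] at this
  have hOx0 : (0 : ZMod p) ∉ Ox := by
    rw [hOxdef, Finset.mem_filter]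
    rintro ⟨-, h, h0, hw⟩
    exact hx ((ρ h).injective (hw.trans h0.symm))
  have hOy0 : (0 : ZMod p) ∉ Oy := by
    rw [hOydef, Finset.mem_filter]
    rintro ⟨-, h, h0, hw⟩
    exact hy ((ρ h).injective (hw.trans h0.symm))
  have hxOy : x ∉ Oy := by
    rw [hOydef, Finset.mem_filter]
    rintro ⟨-, h, h0, hw⟩
    refine hnot ⟨h⁻¹, hfix_inv h0, ?_⟩
    rw [map_inv]
    exact Equiv.Perm.inv_eq_iff_eq.mpr hw.symm
  -- cardinalities
  have hcard_bound : ∀ (S : Finset (ZMod p)), (0 : ZMod p) ∉ S → S.card ≤ p - 1 := by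
    intro S hS
    have hsub : S ⊆ Finset.univ.erase 0 := fun z hz =>
      Finset.mem_erase.mpr ⟨fun h => hS (h ▸ hz), Finset.mem_univ _⟩
    calc S.card ≤ (Finset.univ.erase (0 : ZMod p)).card := Finset.card_le_card hsub
      _ = p - 1 := by
          rw [Finset.card_erase_of_mem (Finset.mem_univ _), Finset.card_univ, ZMod.card]
  have hcy : ((Oy.card : ℕ) : ZMod p) ≠ 0 :=
    natCast_ne_zero_zmod p (Finset.card_pos.mpr ⟨y, hyOy⟩)
      (by have := hcard_bound Oy hOy0; omega)
  have hcx : ((Ox.card : ℕ) : ZMod p) ≠ 0 :=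
    natCast_ne_zero_zmod p (Finset.card_pos.mpr ⟨x, hxOx⟩)
      (by have := hcard_bound Ox hOx0; omega)
  -- the H-fixed vector v
  set v : V p := fun z => (Oy.card : ZMod p) * (if z ∈ Ox then 1 else 0)
      - (Ox.card : ZMod p) * (if z ∈ Oy then 1 else 0) with hvdef
  have hv0 : v 0 = 0 := by
    rw [hvdef]
    simp [hOx0, hOy0]
  have hvx : v x = (Oy.card : ZMod p) := by
    rw [hvdef]
    simp [hxOx, hxOy]
  have hind : ∀ (S : Finset (ZMod p)), ∑ z : ZMod p, (if z ∈ S then (1 : ZMod p) else 0)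
      = (S.card : ZMod p) := by
    intro S
    rw [Finset.sum_boole]
    congr 2
    ext z
    simp
  have hvsum : ∑ z : ZMod p, v z = 0 := by
    rw [hvdef]
    rw [Finset.sum_sub_distrib, ← Finset.mul_sum, ← Finset.mul_sum, hind Ox, hind Oy]
    ring
  have hvH : ∀ {h : G}, ρ h 0 = 0 → v ∘ ⇑(ρ h)⁻¹ = v := by
    intro h hh
    funext z
    show v ((ρ h)⁻¹ z) = v z
    rw [hvdef]
    simp only
    rw [if_congr (hmemOx hh z) rfl rfl, if_congr (hmemOy hh z) rfl rfl]
  -- transporters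
  choose c hc using fun z => htrans 0 z
  have coset : ∀ d₁ d₂ : G, ρ d₁ 0 = ρ d₂ 0 → v ∘ ⇑(ρ d₁)⁻¹ = v ∘ ⇑(ρ d₂)⁻¹ := by
    intro d₁ d₂ hd
    have hh : ρ (d₁⁻¹ * d₂) 0 = 0 := by
      rw [map_mul, Equiv.Perm.mul_apply, map_inv, ← hd, Equiv.Perm.inv_def, Equiv.symm_apply_apply]
    calc v ∘ ⇑(ρ d₁)⁻¹ = (v ∘ ⇑(ρ (d₁⁻¹ * d₂))⁻¹) ∘ ⇑(ρ d₁)⁻¹ := by rw [hvH hh]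
      _ = v ∘ ⇑(ρ (d₁ * (d₁⁻¹ * d₂)))⁻¹ := (comp_inv_mul ρ _ _ _).symm
      _ = v ∘ ⇑(ρ d₂)⁻¹ := by rw [mul_inv_cancel_left]
  -- the equivariant map φ
  set φ : V p →ₗ[ZMod p] V p :=
    { toFun := fun f => ∑ z : ZMod p, f z • (v ∘ ⇑(ρ (c z))⁻¹)
      map_add' := fun f f' => by
        simp only [Pi.add_apply, add_smul]
        rw [Finset.sum_add_distrib]
      map_smul' := fun r f => by
        simp only [Pi.smul_apply, smul_eq_mul, RingHom.id_apply, mul_smul]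
        rw [Finset.smul_sum] } with hφdef
  have hφapp : ∀ f, φ f = ∑ z : ZMod p, f z • (v ∘ ⇑(ρ (c z))⁻¹) := fun f => rfl
  have hφsingle : ∀ z₀ : ZMod p, φ (Pi.single z₀ 1) = v ∘ ⇑(ρ (c z₀))⁻¹ := by
    intro z₀
    rw [hφapp]
    rw [Finset.sum_eq_single z₀ (fun z' _ hz' => by rw [Pi.single_eq_of_ne hz', zero_smul])
      (fun h => absurd (Finset.mem_univ _) h)]
    rw [Pi.single_eq_same, one_smul]
  have hvmem : v ∈ LinearMap.range φ := by
    refine ⟨Pi.single 0 1, ?_⟩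
    rw [hφsingle 0]
    have : v ∘ ⇑(ρ (c 0))⁻¹ = v ∘ ⇑(ρ 1)⁻¹ := coset _ _ (by rw [hc 0, map_one]; rfl)
    rw [this, map_one, inv_one]
    rfl
  have φ_eq : ∀ (g : G) (f : V p), φ (f ∘ ⇑(ρ g)⁻¹) = (φ f) ∘ ⇑(ρ g)⁻¹ := by
    intro g f
    have hR : (φ f) ∘ ⇑(ρ g)⁻¹ = ∑ w : ZMod p, f w • ((v ∘ ⇑(ρ (c w))⁻¹) ∘ ⇑(ρ g)⁻¹) := by
      funext t
      rw [hφapp]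
      simp only [Function.comp_apply, Finset.sum_apply, Pi.smul_apply]
    have hL : φ (f ∘ ⇑(ρ g)⁻¹) = ∑ w : ZMod p, f w • (v ∘ ⇑(ρ (c (ρ g w)))⁻¹) := by
      rw [hφapp]
      rw [← Equiv.sum_comp (ρ g) (fun z => (f ∘ ⇑(ρ g)⁻¹) z • (v ∘ ⇑(ρ (c z))⁻¹))]
      refine Finset.sum_congr rfl fun w _ => ?_
      congr 1
      show f ((ρ g)⁻¹ (ρ g w)) = f w
      rw [Equiv.Perm.inv_def, Equiv.symm_apply_apply]
    rw [hL, hR]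
    refine Finset.sum_congr rfl fun w _ => ?_
    congr 1
    calc v ∘ ⇑(ρ (c (ρ g w)))⁻¹ = v ∘ ⇑(ρ (g * c w))⁻¹ := by
          refine coset _ _ ?_
          rw [hc, map_mul, Equiv.Perm.mul_apply, hc]
      _ = (v ∘ ⇑(ρ (c w))⁻¹) ∘ ⇑(ρ g)⁻¹ := comp_inv_mul ρ _ _ _
  -- invariance of range, kernel, preimage
  have hInvR : Inv ρ (LinearMap.range φ) := by
    rintro g f ⟨f', rfl⟩
    exact ⟨f' ∘ ⇑(ρ g)⁻¹, φ_eq g f'⟩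
  have hInvK : Inv ρ (LinearMap.ker φ) := by
    intro g f hf
    rw [LinearMap.mem_ker] at hf ⊢
    rw [φ_eq, hf]
    rfl
  have hInvQ : Inv ρ (Submodule.comap φ (B p 1)) := by
    intro g f hf
    rw [Submodule.mem_comap] at hf ⊢
    rw [φ_eq]
    exact inv_B1 ρ g (φ f) hf
  -- the sum functional
  set Sl : V p →ₗ[ZMod p] ZMod p :=
    { toFun := fun f => ∑ z : ZMod p, f z
      map_add' := fun f f' => by simp [Finset.sum_add_distrib]
      map_smul' := fun r f => by simp [Finset.mul_sum] } with hSdef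
  have hSapp : ∀ f : V p, Sl f = ∑ z : ZMod p, f z := fun f => rfl
  have hZB : B p (p - 1) ≤ LinearMap.ker Sl := by
    rw [B, Submodule.span_le]
    rintro f ⟨j, hj, rfl⟩
    have hj' : j < p - 1 := hj
    rw [SetLike.mem_coe, LinearMap.mem_ker, hSapp]
    exact sum_pow_zmod p (by omega) (by omega)
  have hkerS : finrank (ZMod p) (LinearMap.ker Sl) = p - 1 := by
    have hrn := LinearMap.finrank_range_add_finrank_ker Sl
    rw [finrank_V] at hrn
    have hne : Sl ≠ 0 := by
      intro h0
      have := hSapp (Pi.single 0 1)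
      rw [h0] at this
      simp only [LinearMap.zero_apply] at this
      rw [Finset.sum_eq_single 0 (fun z' _ hz' => Pi.single_eq_of_ne hz' 1)
        (fun h => absurd (Finset.mem_univ _) h), Pi.single_eq_same] at this
      exact one_ne_zero this.symm
    have h1 : finrank (ZMod p) (LinearMap.range Sl) ≤ 1 := by
      have := Submodule.finrank_le (LinearMap.range Sl)
      rwa [finrank_self] at this
    have h2 : finrank (ZMod p) (LinearMap.range Sl) ≠ 0 := by
      intro h0
      exact hne (LinearMap.range_eq_bot.mp (Submodule.finrank_eq_zero.mp h0))
    omega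
  have hBZ : B p (p - 1) = LinearMap.ker Sl := by
    apply Submodule.eq_of_le_of_finrank_le hZB
    rw [finrank_B p (by omega), hkerS]
  have hRZ : LinearMap.range φ ≤ LinearMap.ker Sl := by
    rintro f ⟨f', rfl⟩
    rw [LinearMap.mem_ker, hSapp]
    have hval : ∀ t : ZMod p, φ f' t = ∑ z : ZMod p, f' z * v ((ρ (c z))⁻¹ t) := by
      intro t
      rw [hφapp]
      rw [Finset.sum_apply]
      rfl
    rw [Finset.sum_congr rfl fun t _ => hval t, Finset.sum_comm]
    rw [Finset.sum_congr rfl fun z (_ : z ∈ univ) => (Finset.mul_sum _ _ _).symm]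
    have hinner : ∀ z : ZMod p, ∑ t : ZMod p, v ((ρ (c z))⁻¹ t) = 0 := by
      intro z
      rw [← Equiv.sum_comp ((ρ (c z))⁻¹ : Equiv.Perm (ZMod p)) v] at hvsum
      exact hvsum
    rw [Finset.sum_congr rfl fun z _ => by rw [hinner z, mul_zero]]
    exact Finset.sum_const_zero
  -- apply the chain classification
  obtain ⟨τ, hτp, hR⟩ := inv_chain ρ hσ hInvR
  obtain ⟨μ, hμp, hK⟩ := inv_chain ρ hσ hInvK
  obtain ⟨w, hwp, hQ⟩ := inv_chain ρ hσ hInvQ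
  have hfrR : finrank (ZMod p) (LinearMap.range φ) = τ := by rw [hR, finrank_B p hτp]
  have hfrK : finrank (ZMod p) (LinearMap.ker φ) = μ := by rw [hK, finrank_B p hμp]
  have hrn := LinearMap.finrank_range_add_finrank_ker φ
  rw [finrank_V, hfrR, hfrK] at hrn
  have hτ2 : 2 ≤ τ := by
    by_contra hcon
    have hv1 : v ∈ B p 1 := B_mono p (by omega) (hR ▸ hvmem)
    obtain ⟨cc, hcc⟩ := (mem_B1 p).mp hv1
    have h0 := congrFun hcc 0
    have hxx := congrFun hcc x
    rw [hv0] at h0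
    rw [hvx] at hxx
    exact hcy (hxx.trans h0.symm)
  have hτp1 : τ ≤ p - 1 := by
    have := Submodule.finrank_mono (hRZ)
    rw [hfrR, hkerS] at this
    exact this
  have hμτ : μ = p - τ := by omega
  -- finrank of Q
  have hKQ : LinearMap.ker φ ≤ Submodule.comap φ (B p 1) := by
    intro f hf
    rw [Submodule.mem_comap, LinearMap.mem_ker.mp hf]
    exact Submodule.zero_mem _
  have hfrQ : finrank (ZMod p) (Submodule.comap φ (B p 1)) = μ + 1 := by
    have hres := LinearMap.finrank_range_add_finrank_ker (φ.domRestrict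
      (Submodule.comap φ (B p 1)))
    rw [LinearMap.range_domRestrict] at hres
    have hmapQ : (Submodule.comap φ (B p 1)).map φ = B p 1 := by
      rw [Submodule.map_comap_eq]
      refine inf_eq_right.mpr ?_
      rw [hR]
      exact B_mono p (by omega)
    rw [hmapQ, LinearMap.ker_domRestrict] at hres
    have hkerQ : finrank (ZMod p) (Submodule.comap (Submodule.comap φ (B p 1)).subtype
        (LinearMap.ker φ)) = μ := by
      rw [← hfrK]
      exact (Submodule.comapSubtypeEquivOfLe hKQ).finrank_eq
    rw [hkerQ, finrank_B p (by omega)] at hres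
    omega
  have hwμ : w = μ + 1 := by
    have := hfrQ
    rw [hQ, finrank_B p hwp] at this
    exact this
  -- invariant submodules
  have hIμ : Inv ρ (B p μ) := hK ▸ hInvK
  have hIμ1 : Inv ρ (B p (μ + 1)) := (hwμ ▸ hQ) ▸ hInvQ
  have hμ1 : 1 ≤ μ := by omega
  have hμ2 : μ ≤ p - 2 := by omega
  -- perp : B (τ - 1) is invariant
  have hIτ1 : Inv ρ (B p (τ - 1)) := by
    have := inv_perp ρ (s := μ + 1) (by omega) hIμ1
    have he : p - (μ + 1) = τ - 1 := by omega
    rwa [he] at this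
  -- product : B (p - 2) is invariant
  have hIp2 : Inv ρ (B p (p - 2)) := by
    obtain ⟨a, ha⟩ : ∃ a, μ = a + 1 := ⟨μ - 1, by omega⟩
    obtain ⟨b, hb⟩ : ∃ b, τ - 1 = b + 1 := ⟨τ - 2, by omega⟩
    have := inv_mul ρ (ha ▸ hIμ) (hb ▸ hIτ1)
    rw [B_mul] at this
    have he : a + b + 1 = p - 2 := by omega
    rwa [he] at this
  -- perp again : B 2 is invariant
  have hIB2 : Inv ρ (B p 2) := by
    have := inv_perp ρ (s := p - 2) (by omega) hIp2
    have he : p - (p - 2) = 2 := by omega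
    rwa [he] at this
  -- conclude affinity
  intro g
  have hmon1 : (mon p 1 ∘ ⇑(ρ g⁻¹)⁻¹) ∈ B p 2 := hIB2 g⁻¹ (mon p 1) (mon_mem_B p one_lt_two)
  have heq : (mon p 1 ∘ ⇑(ρ g⁻¹)⁻¹) = ⇑(ρ g) := by
    funext z
    show mon p 1 ((ρ g⁻¹)⁻¹ z) = ρ g z
    rw [map_inv, inv_inv]
    simp [mon]
  rw [heq] at hmon1
  have hB2span : B p 2 = Submodule.span (ZMod p) {mon p 0, mon p 1} := by
    unfold B
    congr 1
    apply Set.Subset.antisymm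
    · rintro f ⟨i, hi, rfl⟩
      have hi' : i < 2 := hi
      interval_cases i
      · exact Set.mem_insert _ _
      · exact Set.mem_insert_of_mem _ rfl
    · rintro f (rfl | rfl)
      · exact ⟨0, Set.mem_Iio.mpr (by omega), rfl⟩
      · exact ⟨1, Set.mem_Iio.mpr (by omega), rfl⟩
  rw [hB2span, Submodule.mem_span_pair] at hmon1
  obtain ⟨cc, dd, hcd⟩ := hmon1
  have hval : ∀ z : ZMod p, ρ g z = dd * z + cc := by
    intro z
    have := congrFun hcd z
    simp only [Pi.add_apply, Pi.smul_apply, smul_eq_mul, mon, pow_zero, pow_one, mul_one] at this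
    rw [← this]
    ring
  have hdd : dd ≠ 0 := by
    intro h0
    have h01 : ρ g 0 = ρ g 1 := by
      rw [hval 0, hval 1, h0]
      ring
    have := (ρ g).injective h01
    exact one_ne_zero this.symm
  exact ⟨dd, cc, hdd, hval⟩

end Core

section Solv
variable {p : ℕ} [Fact p.Prime] {G : Type*} [Group G]

theorem solvable_of_affine (ρ : G →* Equiv.Perm (ZMod p))
    (hinj : Function.Injective ρ)
    (haff : ∀ g : G, ∃ a b : ZMod p, a ≠ 0 ∧ ∀ z, ρ g z = a * z + b) : IsSolvable G := by
  classical
  set slope : G → ZMod p := fun g => ρ g 1 - ρ g 0 with hs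
  have hslope : ∀ g : G, ∀ a b : ZMod p, (∀ z, ρ g z = a * z + b) → slope g = a := by
    intro g a b hab
    rw [hs]
    simp only
    rw [hab 1, hab 0]
    ring
  have hform : ∀ (g : G) (z : ZMod p), ρ g z = slope g * z + ρ g 0 := by
    intro g z
    obtain ⟨a, b, ha, hab⟩ := haff g
    rw [hslope g a b hab, hab z, hab 0]
    ring
  have hne : ∀ g, slope g ≠ 0 := by
    intro g
    obtain ⟨a, b, ha, hab⟩ := haff g
    rw [hslope g a b hab]
    exact ha
  have hmul : ∀ g h, slope (g * h) = slope g * slope h := by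
    intro g h
    have h1 : ρ (g * h) 1 = ρ g (ρ h 1) := by rw [map_mul]; rfl
    have h0 : ρ (g * h) 0 = ρ g (ρ h 0) := by rw [map_mul]; rfl
    have : ρ (g * h) 1 - ρ (g * h) 0 = slope g * slope h := by
      rw [h1, h0, hform g (ρ h 1), hform g (ρ h 0), hform h 1, hform h 0]
      ring
    rw [hs]
    simpa using this
  set χ : G →* (ZMod p)ˣ := MonoidHom.mk' (fun g => Units.mk0 (slope g) (hne g))
    (fun g h => by ext; simp [hmul]) with hχ
  have hχval : ∀ g : G, (χ g : ZMod p) = slope g := fun g => rfl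
  have hkercomm : ∀ a b : χ.ker, a * b = b * a := by
    rintro ⟨a, hA⟩ ⟨b, hB⟩
    rw [MonoidHom.mem_ker] at hA hB
    have hsa : slope a = 1 := by rw [← hχval, hA]; rfl
    have hsb : slope b = 1 := by rw [← hχval, hB]; rfl
    apply Subtype.ext
    show a * b = b * a
    apply hinj
    apply Equiv.ext
    intro z
    have hab : ρ (a * b) z = z + (ρ b 0 + ρ a 0) := by
      rw [map_mul, Equiv.Perm.mul_apply, hform a, hform b, hsa, hsb]
      ring
    have hba : ρ (b * a) z = z + (ρ a 0 + ρ b 0) := by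
      rw [map_mul, Equiv.Perm.mul_apply, hform b, hform a, hsa, hsb]
      ring
    rw [hab, hba, add_comm (ρ a 0)]
  haveI : IsSolvable χ.ker := isSolvable_of_comm hkercomm
  exact solvable_of_ker_le_range χ.ker.subtype χ (fun g hg => ⟨⟨g, hg⟩, rfl⟩) (hG' := this)

end Solv


end BurnsideAux

/-- **Burnside.** Let `G` act faithfully and transitively on a finite set `Ω` of prime
cardinality `p`. If `G` is not solvable, then the action of `G` on `Ω` is `2`-transitive. -/
theorem two_transitive_of_not_solvable_of_prime_degree
    (G : Type*) [Group G] (Ω : Type*) [Fintype Ω]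
    [MulAction G Ω] [FaithfulSMul G Ω] (htrans : MulAction.IsPretransitive G Ω)
    (p : ℕ) (hp : p.Prime) (hΩ : Fintype.card Ω = p)
    (hsolv : ¬ IsSolvable G) :
    ∀ a b c d : Ω, a ≠ b → c ≠ d → ∃ g : G, g • a = c ∧ g • b = d := by
  classical
  haveI hfp : Fact p.Prime := ⟨hp⟩
  have hp2 : 2 ≤ p := hp.two_le
  haveI : Finite G := Finite.of_injective _ (MulAction.toPerm_injective (α := G) (β := Ω))
  haveI : Fintype G := Fintype.ofFinite G
  have hdvd : p ∣ Fintype.card G := by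
    obtain ⟨ω⟩ : Nonempty Ω := Fintype.card_pos_iff.mp (by omega)
    have h1 := MulAction.index_stabilizer_of_transitive G ω
    have h2 := Subgroup.index_dvd_card (MulAction.stabilizer G ω)
    rw [h1] at h2
    rwa [Nat.card_eq_fintype_card, Nat.card_eq_fintype_card, hΩ] at h2
  obtain ⟨g₀, hg₀⟩ := exists_prime_orderOf_dvd_card p hdvd
  have hmove : ∃ ω : Ω, g₀ • ω ≠ ω := by
    by_contra hcon
    push_neg at hcon
    have hone : g₀ = 1 := by
      apply eq_of_smul_eq_smul (α := Ω)
      intro ω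
      rw [hcon ω, one_smul]
    rw [hone, orderOf_one] at hg₀
    omega
  obtain ⟨ω₁, hω₁⟩ := hmove
  have hkey : ∀ k : ℕ, g₀ ^ k • ω₁ = ω₁ → p ∣ k := by
    intro k hk
    by_contra hndvd
    have hcop : Nat.Coprime p k := (Nat.Prime.coprime_iff_not_dvd hp).mpr hndvd
    obtain ⟨m, -, hm⟩ := Nat.exists_mul_mod_eq_one_of_coprime hcop.symm hp.one_lt
    have hfix : g₀ ^ (k * m) • ω₁ = ω₁ := by
      rw [pow_mul]
      have hmem : g₀ ^ k ∈ MulAction.stabilizer G ω₁ := hk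
      exact pow_mem hmem m
    have hpow : g₀ ^ (k * m) = g₀ := by
      have hmod : k * m ≡ 1 [MOD orderOf g₀] := by
        rw [hg₀]
        show k * m % p = 1 % p
        rw [hm, Nat.mod_eq_of_lt hp.one_lt]
      calc g₀ ^ (k * m) = g₀ ^ 1 := pow_eq_pow_iff_modEq.mpr hmod
        _ = g₀ := pow_one g₀
    rw [hpow] at hfix
    exact hω₁ hfix
  -- the identification of ZMod p with Ω
  have hE : Function.Bijective (fun i : ZMod p => g₀ ^ (i.val) • ω₁) := by
    rw [Fintype.bijective_iff_injective_and_card]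
    constructor
    · have hgen : ∀ i j : ZMod p, j.val ≤ i.val →
          g₀ ^ i.val • ω₁ = g₀ ^ j.val • ω₁ → i = j := by
        intro i j hle hij
        have hsplit : g₀ ^ i.val = g₀ ^ j.val * g₀ ^ (i.val - j.val) := by
          rw [← pow_add]
          congr 1
          omega
        rw [hsplit, mul_smul] at hij
        have h2 : g₀ ^ (i.val - j.val) • ω₁ = ω₁ := smul_left_cancel _ hij
        have h3 := hkey _ h2
        have hi := ZMod.val_lt i
        have hj := ZMod.val_lt j
        have h4 : i.val - j.val = 0 := Nat.eq_zero_of_dvd_of_lt h3 (by omega)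
        exact ZMod.val_injective p (by omega)
      intro i j hij
      rcases le_total j.val i.val with h | h
      · exact hgen i j h hij
      · exact (hgen j i h hij.symm).symm
    · rw [ZMod.card, hΩ]
  set e : ZMod p ≃ Ω := Equiv.ofBijective _ hE with hedef
  have heapp : ∀ i : ZMod p, e i = g₀ ^ (i.val) • ω₁ := fun i => rfl
  have he1 : ∀ i : ZMod p, g₀ • e i = e (i + 1) := by
    intro i
    rw [heapp, heapp, smul_smul]
    have h1 : g₀ * g₀ ^ i.val = g₀ ^ (i.val + 1) := (pow_succ' g₀ i.val).symm
    rw [h1]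
    have h2 : g₀ ^ (i.val + 1) = g₀ ^ ((i + 1 : ZMod p)).val := by
      apply pow_eq_pow_iff_modEq.mpr
      rw [hg₀]
      have hval : (i + 1 : ZMod p).val = (i.val + 1) % p := by
        rw [ZMod.val_add]
        congr 1
        rw [ZMod.val_one]
      rw [hval]
      exact (Nat.mod_modEq _ p).symm
    rw [h2]
  set ρ : G →* Equiv.Perm (ZMod p) :=
    { toFun := fun g => (e.trans (MulAction.toPerm g)).trans e.symm
      map_one' := by
        ext i
        simp [MulAction.toPerm_apply]
      map_mul' := fun g h => by
        ext i
        simp [MulAction.toPerm_apply, mul_smul] } with hρdef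
  have hρapp : ∀ (g : G) (i : ZMod p), ρ g i = e.symm (g • e i) := fun g i => rfl
  have hρinj : Function.Injective ρ := by
    intro g h hgh
    apply eq_of_smul_eq_smul (α := Ω)
    intro ω
    have h1 : ρ g (e.symm ω) = ρ h (e.symm ω) := by rw [hgh]
    rw [hρapp, hρapp, e.apply_symm_apply] at h1
    exact e.symm.injective h1
  have hρtrans : ∀ i j : ZMod p, ∃ g : G, ρ g i = j := by
    intro i j
    obtain ⟨g, hg⟩ := MulAction.exists_smul_eq G (e i) (e j)
    exact ⟨g, by rw [hρapp, hg, e.symm_apply_apply]⟩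
  have hρσ : ∀ i : ZMod p, ρ g₀ i = i + 1 := by
    intro i
    rw [hρapp, he1, e.symm_apply_apply]
  -- the key 2-transitivity at 0
  have key : ∀ x y : ZMod p, x ≠ 0 → y ≠ 0 → ∃ h : G, ρ h 0 = 0 ∧ ρ h x = y := by
    intro x y hx hy
    by_contra hnot
    rcases eq_or_ne x y with rfl | hxy
    · exact hnot ⟨1, by simp⟩
    have hp3 : 3 ≤ p := by
      have h0x : (0 : ZMod p) ∉ ({x, y} : Finset (ZMod p)) := by
        simp only [Finset.mem_insert, Finset.mem_singleton]
        push_neg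
        exact ⟨Ne.symm hx, Ne.symm hy⟩
      have hxy' : x ∉ ({y} : Finset (ZMod p)) := by simpa using hxy
      have h3 : ({0, x, y} : Finset (ZMod p)).card = 3 := by
        rw [Finset.card_insert_of_notMem h0x, Finset.card_insert_of_notMem hxy',
          Finset.card_singleton]
      have hle := Finset.card_le_univ ({0, x, y} : Finset (ZMod p))
      rwa [h3, ZMod.card] at hle
    have haff := BurnsideAux.core hp3 ρ g₀ hρσ hρtrans hx hy hnot
    exact hsolv (BurnsideAux.solvable_of_affine ρ hρinj haff)
  -- assemble 2-transitivity
  intro a b c d hab hcd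
  obtain ⟨g₁, hg₁⟩ := hρtrans (e.symm a) 0
  obtain ⟨g₂, hg₂⟩ := hρtrans (e.symm c) 0
  have hxne : ρ g₁ (e.symm b) ≠ 0 := by
    rw [← hg₁]
    intro hcon
    exact hab (e.symm.injective ((ρ g₁).injective hcon)).symm
  have hyne : ρ g₂ (e.symm d) ≠ 0 := by
    rw [← hg₂]
    intro hcon
    exact hcd (e.symm.injective ((ρ g₂).injective hcon)).symm
  obtain ⟨h, hh0, hhxy⟩ := key _ _ hxne hyne
  refine ⟨g₂⁻¹ * (h * g₁), ?_, ?_⟩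
  · have h1 : ρ (g₂⁻¹ * (h * g₁)) (e.symm a) = e.symm c := by
      rw [map_mul, map_mul, map_inv]
      show (ρ g₂)⁻¹ ((ρ h) ((ρ g₁) (e.symm a))) = e.symm c
      rw [hg₁, hh0]
      exact Equiv.Perm.inv_eq_iff_eq.mpr hg₂.symm
    have := h1
    rw [hρapp] at this
    have h2 : (g₂⁻¹ * (h * g₁)) • a = e (e.symm c) := by
      rw [← this, e.apply_symm_apply]
      congr 1
      rw [e.apply_symm_apply]
    rwa [e.apply_symm_apply] at h2
  · have h1 : ρ (g₂⁻¹ * (h * g₁)) (e.symm b) = e.symm d := by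
      rw [map_mul, map_mul, map_inv]
      show (ρ g₂)⁻¹ ((ρ h) ((ρ g₁) (e.symm b))) = e.symm d
      rw [hhxy]
      exact Equiv.symm_apply_apply _ _
    have := h1
    rw [hρapp] at this
    have h2 : (g₂⁻¹ * (h * g₁)) • b = e (e.symm d) := by
      rw [← this, e.apply_symm_apply]
      congr 1
      rw [e.apply_symm_apply]
    rwa [e.apply_symm_apply] at h2
end

section
/- Let q be a prime, let m be a primitive root modulo q (a generator of the cyclic group (ℤ/qℤ)ˣ), let n > 1 be a divisor of q − 1, let ζ_q = exp(2πi/q) ∈ ℂ, and set α_n = Σ_{j=0}^{(q−1)/n − 1} ζ_q^{m^{jn}}. Then ℚ(α_n) is the fixed field of σⁿ in ℚ(ζ_q), where σ is the automorphism of ℚ(ζ_q) with σ(ζ_q) = ζ_q^m; in particular, ℚ(α_n)/ℚ is a Galois extension of degree n with cyclic Galois group of order n. -/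
open Polynomial Complex IntermediateField

set_option maxHeartbeats 2000000 in
set_option synthInstance.maxHeartbeats 200000 in
/-- Let `q` be a prime, `m` a primitive root modulo `q`, `n > 1` a divisor of `q - 1`,
`ζ_q = exp(2πi/q)`, and let `α_n = Σ_{j=0}^{(q-1)/n - 1} ζ_q^(m^(j*n))` be the Gaussian
period of degree `n`. If `σ` is the automorphism of `K = ℚ(ζ_q)` with `σ(ζ_q) = ζ_q^m`,
then `ℚ(α_n)` is the fixed field of `σ^n` in `K`; in particular `ℚ(α_n)/ℚ` is a Galois
extension of degree `n` with cyclic Galois group of order `n`. -/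
theorem gaussian_period_generates_fixed_field
    (q : ℕ) (hq : q.Prime) (m : ℕ) (hm : orderOf (m : ZMod q) = q - 1)
    (n : ℕ) (hn : 1 < n) (hnq : n ∣ q - 1)
    (ζ : ℂ) (hζ : ζ = Complex.exp (2 * Real.pi * Complex.I / q))
    (α : ℂ) (hα : α = ∑ j ∈ Finset.range ((q - 1) / n), ζ ^ (m ^ (j * n)))
    (σ : (IntermediateField.adjoin ℚ ({ζ} : Set ℂ)) ≃ₐ[ℚ]
      (IntermediateField.adjoin ℚ ({ζ} : Set ℂ)))
    (hσ : σ ⟨ζ, IntermediateField.mem_adjoin_simple_self ℚ ζ⟩ =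
      ⟨ζ, IntermediateField.mem_adjoin_simple_self ℚ ζ⟩ ^ m) :
    IntermediateField.adjoin ℚ ({α} : Set ℂ) =
      IntermediateField.map (IntermediateField.adjoin ℚ ({ζ} : Set ℂ)).val
        (IntermediateField.fixedField (Subgroup.zpowers (σ ^ n))) ∧
    IsGalois ℚ (IntermediateField.adjoin ℚ ({α} : Set ℂ)) ∧
    Module.finrank ℚ (IntermediateField.adjoin ℚ ({α} : Set ℂ)) = n ∧
    IsCyclic ((IntermediateField.adjoin ℚ ({α} : Set ℂ)) ≃ₐ[ℚ]
      (IntermediateField.adjoin ℚ ({α} : Set ℂ))) := by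
  classical
  -- basic numerology
  have hq2 : 2 ≤ q - 1 := by
    have h1 : 2 ≤ q := hq.two_le
    have := Nat.le_of_dvd (by omega) hnq
    omega
  have hq0 : q ≠ 0 := hq.ne_zero
  haveI : Fact q.Prime := ⟨hq⟩
  haveI : NeZero q := ⟨hq0⟩
  set r := (q - 1) / n with hr
  have hrn : r * n = q - 1 := Nat.div_mul_cancel hnq
  have hr0 : 0 < r := Nat.div_pos (Nat.le_of_dvd (by omega) hnq) (by omega)
  -- the primitive root
  have hζprim : IsPrimitiveRoot ζ q := by
    rw [hζ]; exact Complex.isPrimitiveRoot_exp q hq0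
  set ζ' : ℚ⟮ζ⟯ := ⟨ζ, IntermediateField.mem_adjoin_simple_self ℚ ζ⟩ with hζ'def
  have hζ'prim : IsPrimitiveRoot ζ' q := by
    rwa [← IsPrimitiveRoot.coe_submonoidClass_iff (M := ℂ)]
  set Q : ℕ+ := ⟨q, hq.pos⟩ with hQ
  have hζ'primQ : IsPrimitiveRoot ζ' (Q : ℕ) := hζ'prim
  haveI hcyc : IsCyclotomicExtension {(Q : ℕ)} ℚ ℚ⟮ζ⟯ := by
    have hint : IsIntegral ℚ ζ := by
      refine ⟨X ^ q - 1, by simpa using monic_X_pow_sub_C (1 : ℚ) hq0, ?_⟩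
      simp [sub_eq_zero, hζprim.pow_eq_one]
    have H := IntermediateField.adjoin_simple_toSubalgebra_of_isAlgebraic hint.isAlgebraic
    refine IsCyclotomicExtension.equiv _ _ _ (h := ?_) (.refl : ℚ⟮ζ⟯.toSubalgebra ≃ₐ[ℚ] _)
    rw [H]
    exact IsPrimitiveRoot.adjoin_isCyclotomicExtension ℚ (n := q) hζprim
  haveI : FiniteDimensional ℚ ℚ⟮ζ⟯ := IsCyclotomicExtension.finiteDimensional {(Q : ℕ)} ℚ ℚ⟮ζ⟯
  haveI : IsGalois ℚ ℚ⟮ζ⟯ := IsCyclotomicExtension.isGalois {(Q : ℕ)} ℚ ℚ⟮ζ⟯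
  have hfinK : Module.finrank ℚ ℚ⟮ζ⟯ = q - 1 := by
    rw [IsCyclotomicExtension.finrank (n := (Q : ℕ)) ℚ⟮ζ⟯
      (Polynomial.cyclotomic.irreducible_rat Q.pos)]
    exact Nat.totient_prime hq
  -- powers of σ on ζ'
  have hσpow : ∀ k : ℕ, (σ ^ k) ζ' = ζ' ^ (m ^ k) := by
    intro k
    induction k with
    | zero => simp
    | succ k ih =>
      rw [pow_succ, AlgEquiv.mul_apply, hσ, map_pow, ih, ← pow_mul, ← pow_succ]
  have hord' : orderOf ζ' = q := (hζ'prim.eq_orderOf).symm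
  have hmodpow : ∀ s : ℕ, ζ' ^ (s % q) = ζ' ^ s := fun s => by
    conv_lhs => rw [← hord']
    exact pow_mod_orderOf ζ' s
  have hzpow : ∀ s t : ℕ, ζ' ^ s = ζ' ^ t ↔ s ≡ t [MOD q] := by
    intro s t
    constructor
    · intro h
      have h2 : ζ' ^ (s % q) = ζ' ^ (t % q) := by rw [hmodpow, hmodpow, h]
      exact hζ'prim.pow_inj (Nat.mod_lt s hq.pos) (Nat.mod_lt t hq.pos) h2
    · intro h
      rw [← hmodpow s, ← hmodpow t, h]
  -- power basis
  have hgenpb : (hζ'primQ.powerBasis ℚ).gen = ζ' := IsPrimitiveRoot.powerBasis_gen ℚ hζ'primQ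
  have hσeq : ∀ (f g : ℚ⟮ζ⟯ ≃ₐ[ℚ] ℚ⟮ζ⟯), f ζ' = g ζ' → f = g := by
    intro f g h
    have := PowerBasis.algHom_ext (hζ'primQ.powerBasis ℚ)
      (f := f.toAlgHom) (g := g.toAlgHom) (by rwa [hgenpb])
    exact AlgEquiv.ext fun x => AlgHom.ext_iff.mp this x
  -- the order of σ is q - 1
  have hmpowmod : ∀ k : ℕ, ((m : ZMod q)) ^ k = 1 ↔ m ^ k ≡ 1 [MOD q] := by
    intro k
    rw [← Nat.cast_pow, ← Nat.cast_one (R := ZMod q), ZMod.natCast_eq_natCast_iff]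
  have h1 : σ ^ (q - 1) = 1 := by
    apply hσeq
    rw [hσpow]
    show ζ' ^ (m ^ (q-1)) = ζ'
    nth_rewrite 2 [← pow_one ζ']
    rw [hzpow]
    exact (hmpowmod _).mp (by rw [← hm]; exact pow_orderOf_eq_one _)
  have horder : orderOf σ = q - 1 := by
    apply Nat.dvd_antisymm (orderOf_dvd_of_pow_eq_one h1)
    rw [← hm]
    apply orderOf_dvd_of_pow_eq_one
    rw [hmpowmod]
    have h3 : ζ' ^ (m ^ orderOf σ) = ζ' ^ 1 := by
      rw [← hσpow, pow_orderOf_eq_one, pow_one]; rfl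
    exact (hzpow _ _).mp h3
  have hcard : Fintype.card (ℚ⟮ζ⟯ ≃ₐ[ℚ] ℚ⟮ζ⟯) = q - 1 := by
    rw [← Nat.card_eq_fintype_card, IsGalois.card_aut_eq_finrank, hfinK]
  have htop : Subgroup.zpowers σ = ⊤ := by
    apply Subgroup.eq_top_of_card_eq
    rw [Nat.card_zpowers, horder, Nat.card_eq_fintype_card, hcard]
  have hgenall : ∀ τ : ℚ⟮ζ⟯ ≃ₐ[ℚ] ℚ⟮ζ⟯, ∃ k : ℕ, σ ^ k = τ := by
    intro τ
    have h4 : τ ∈ Subgroup.zpowers σ := htop ▸ Subgroup.mem_top τ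
    rw [← mem_powers_iff_mem_zpowers] at h4
    exact h4
  -- the unit corresponding to m
  have hmpow1 : (m : ZMod q) ^ (q - 1) = 1 := by rw [← hm]; exact pow_orderOf_eq_one _
  have hmu : IsUnit (m : ZMod q) := IsUnit.of_pow_eq_one hmpow1 (by omega)
  have hucoe : (hmu.unit : ZMod q) = (m : ZMod q) := hmu.unit_spec
  set u : (ZMod q)ˣ := hmu.unit with hu
  have huord : orderOf u = q - 1 := by
    rw [← hm, ← hucoe, orderOf_units]
  -- the exponential function on units
  set E : (ZMod q)ˣ → ℚ⟮ζ⟯ := fun w => ζ' ^ (w : ZMod q).val with hE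
  have hEpow : ∀ t : ℕ, ζ' ^ (m ^ t) = E (u ^ t) := by
    intro t
    have h1 : ((u ^ t : (ZMod q)ˣ) : ZMod q) = ((m ^ t : ℕ) : ZMod q) := by
      push_cast [hucoe]; ring
    show ζ' ^ (m ^ t) = ζ' ^ ((u ^ t : (ZMod q)ˣ) : ZMod q).val
    rw [h1, ZMod.val_natCast, hmodpow]
  -- the Gaussian period inside the cyclotomic field
  set α' : ℚ⟮ζ⟯ := ∑ j ∈ Finset.range r, ζ' ^ (m ^ (j * n)) with hα'
  have hvalα : (IntermediateField.adjoin ℚ ({ζ} : Set ℂ)).val α' = α := by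
    rw [hα', hα, map_sum]
    exact Finset.sum_congr rfl fun j _ => by rw [map_pow]; rfl
  have hαE : α' = ∑ j ∈ Finset.range r, E (u ^ (j * n)) := by
    rw [hα']
    exact Finset.sum_congr rfl fun j _ => hEpow _
  have hσkα : ∀ k : ℕ, (σ ^ k) α' = ∑ j ∈ Finset.range r, E (u ^ (k + j * n)) := by
    intro k
    rw [hα', map_sum]
    refine Finset.sum_congr rfl fun j _ => ?_
    rw [map_pow, hσpow, ← pow_mul, ← pow_add, hEpow]
  -- linear independence of E
  have hlin : LinearIndependent ℚ E := by
    have hdim : (hζ'primQ.powerBasis ℚ).dim = q - 1 := by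
      have h5 := (hζ'primQ.powerBasis ℚ).finrank
      rw [hfinK] at h5; omega
    have hbase : LinearIndependent ℚ
        (fun i : Fin (hζ'primQ.powerBasis ℚ).dim => ζ' ^ ((i : ℕ) + 1)) := by
      have h0 := (hζ'primQ.powerBasis ℚ).basis.linearIndependent
      have hker : LinearMap.ker (LinearMap.mulLeft ℚ ζ') = ⊥ := by
        rw [LinearMap.ker_eq_bot]
        intro a b hab
        exact mul_left_cancel₀ (hζ'prim.ne_zero (by omega)) hab
      have h1 := h0.map' (LinearMap.mulLeft ℚ ζ') hker
      have h2 : (LinearMap.mulLeft ℚ ζ') ∘ (hζ'primQ.powerBasis ℚ).basis =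
          fun i : Fin (hζ'primQ.powerBasis ℚ).dim => ζ' ^ ((i : ℕ) + 1) := by
        funext i
        simp only [Function.comp_apply, LinearMap.mulLeft_apply, PowerBasis.coe_basis, hgenpb]
        exact (pow_succ' _ _).symm
      rwa [h2] at h1
    have hval0 : ∀ w : (ZMod q)ˣ, (w : ZMod q).val ≠ 0 := by
      intro w hw
      exact w.ne_zero ((ZMod.val_eq_zero _).mp hw)
    have hvalq : ∀ w : (ZMod q)ˣ, (w : ZMod q).val < q := fun w => ZMod.val_lt _
    set g : (ZMod q)ˣ → Fin (hζ'primQ.powerBasis ℚ).dim :=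
      fun w => ⟨(w : ZMod q).val - 1, by
        rw [hdim]
        have := hvalq w
        have := hval0 w
        omega⟩ with hg
    have hginj : Function.Injective g := by
      intro w w' hww
      have h6 : (w : ZMod q).val - 1 = ((w' : ZMod q)).val - 1 := congrArg Fin.val hww
      have h7 : (w : ZMod q).val = (w' : ZMod q).val := by
        have := hval0 w; have := hval0 w'; omega
      exact Units.ext (ZMod.val_injective q h7)
    have hEg : E = (fun i : Fin (hζ'primQ.powerBasis ℚ).dim => ζ' ^ ((i : ℕ) + 1)) ∘ g := by
      funext w
      show ζ' ^ (w : ZMod q).val = ζ' ^ (((w : ZMod q).val - 1) + 1)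
      congr 1
      have := hval0 w; omega
    rw [hEg]
    exact hbase.comp g hginj
  -- sums over distinct finsets of units are distinct
  have hsum_inj : ∀ S T : Finset (ZMod q)ˣ, ∑ w ∈ S, E w = ∑ w ∈ T, E w → S = T := by
    intro S T h
    have h2 := Fintype.linearIndependent_iff.mp hlin
      (fun w => (if w ∈ S then (1 : ℚ) else 0) - (if w ∈ T then 1 else 0)) ?_
    · ext w
      have h3 := h2 w
      by_cases hS : w ∈ S <;> by_cases hT : w ∈ T <;> simp [hS, hT] at h3 ⊢
    · simp only [sub_smul, ite_smul, one_smul, zero_smul, Finset.sum_sub_distrib]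
      rw [Finset.sum_ite_mem, Finset.sum_ite_mem, Finset.univ_inter, Finset.univ_inter, h,
        sub_self]
  -- σ^n fixes α'
  have hfix : (σ ^ n) α' = α' := by
    rw [hσkα n, hαE]
    have h1 := Finset.sum_range_succ' (fun j => E (u ^ (j * n))) r
    have h2 := Finset.sum_range_succ (fun j => E (u ^ (j * n))) r
    have h3 : E (u ^ (r * n)) = E (u ^ (0 * n)) := by
      rw [hrn, ← huord, pow_orderOf_eq_one, zero_mul, pow_zero]
    have h4 : ∀ j, E (u ^ (n + j * n)) = E (u ^ ((j + 1) * n)) := by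
      intro j; congr 2; ring
    calc ∑ j ∈ Finset.range r, E (u ^ (n + j * n))
        = ∑ j ∈ Finset.range r, E (u ^ ((j + 1) * n)) :=
          Finset.sum_congr rfl fun j _ => h4 j
      _ = ∑ j ∈ Finset.range r, E (u ^ (j * n)) := by
          have h5 := h1.symm.trans h2
          simp only [zero_mul] at h5 h3 ⊢
          have h6 : (∑ j ∈ Finset.range r, E (u ^ ((j + 1) * n))) + E (u ^ 0)
              = (∑ j ∈ Finset.range r, E (u ^ (j * n))) + E (u ^ 0) := by
            rw [h5]
            rw [h3]
          exact add_right_cancel h6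
  -- if σ^k fixes α' then n ∣ k
  have hdvd : ∀ k : ℕ, (σ ^ k) α' = α' → n ∣ k := by
    intro k hk
    rw [hσkα, hαE] at hk
    have hinj : ∀ k' : ℕ, Set.InjOn (fun j => u ^ (k' + j * n)) (Finset.range r) := by
      intro k' j hj j' hj' hjj
      simp only [Finset.coe_range, Set.mem_Iio] at hj hj'
      simp only at hjj
      rw [pow_eq_pow_iff_modEq, huord] at hjj
      have h8 : j * n ≡ j' * n [MOD q - 1] := Nat.ModEq.add_left_cancel' k' hjj
      have hb1 : j * n < q - 1 := by
        have : (j + 1) * n ≤ r * n := Nat.mul_le_mul_right n hj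
        nlinarith
      have hb2 : j' * n < q - 1 := by
        have : (j' + 1) * n ≤ r * n := Nat.mul_le_mul_right n hj'
        nlinarith
      have h9 : j * n = j' * n := by
        have := h8
        unfold Nat.ModEq at this
        rwa [Nat.mod_eq_of_lt hb1, Nat.mod_eq_of_lt hb2] at this
      exact Nat.eq_of_mul_eq_mul_right (by omega) h9
    have e1 := Finset.sum_image (f := E) (g := fun j => u ^ (k + j * n))
      (fun x hx y hy hxy => hinj k (Finset.mem_coe.mpr hx) (Finset.mem_coe.mpr hy) hxy)
    have e2 := Finset.sum_image (f := E) (g := fun j => u ^ (0 + j * n))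
      (fun x hx y hy hxy => hinj 0 (Finset.mem_coe.mpr hx) (Finset.mem_coe.mpr hy) hxy)
    simp only [zero_add] at e2
    have hST := hsum_inj ((Finset.range r).image (fun j => u ^ (k + j * n)))
      ((Finset.range r).image (fun j => u ^ (j * n))) (by rw [e1, e2]; exact hk)
    have hmem : u ^ k ∈ (Finset.range r).image (fun j => u ^ (j * n)) := by
      rw [← hST]
      exact Finset.mem_image.mpr ⟨0, Finset.mem_range.mpr hr0, by simp⟩
    obtain ⟨j, hj, hjk⟩ := Finset.mem_image.mp hmem
    rw [pow_eq_pow_iff_modEq, huord] at hjk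
    have h10 : j * n ≡ k [MOD n] := hjk.of_dvd hnq
    have h11 : k ≡ 0 [MOD n] := (h10.symm.trans (Nat.modEq_zero_iff_dvd.mpr ⟨j, mul_comm j n⟩))
    exact Nat.modEq_zero_iff_dvd.mp h11
  -- α' is in the fixed field of ⟨σ^n⟩
  have hfix' : σ ^ n ∈ MulAction.stabilizer (ℚ⟮ζ⟯ ≃ₐ[ℚ] ℚ⟮ζ⟯) α' := by
    rw [MulAction.mem_stabilizer_iff, AlgEquiv.smul_def, hfix]
  have hstab : Subgroup.zpowers (σ ^ n) ≤ MulAction.stabilizer (ℚ⟮ζ⟯ ≃ₐ[ℚ] ℚ⟮ζ⟯) α' :=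
    Subgroup.zpowers_le.mpr hfix'
  have hfixmem : α' ∈ fixedField (Subgroup.zpowers (σ ^ n)) := by
    intro g
    exact hstab g.2
  -- fixing subgroup of ℚ(α') is ⟨σ^n⟩
  have hle1 : Subgroup.zpowers (σ ^ n) ≤
      fixingSubgroup (IntermediateField.adjoin ℚ ({α'} : Set ℚ⟮ζ⟯)) := by
    rw [← IntermediateField.le_iff_le, IntermediateField.adjoin_le_iff]
    intro y hy
    rw [Set.mem_singleton_iff] at hy
    subst hy
    exact hfixmem
  have hle2 : fixingSubgroup (IntermediateField.adjoin ℚ ({α'} : Set ℚ⟮ζ⟯)) ≤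
      Subgroup.zpowers (σ ^ n) := by
    intro τ hτ
    rw [IntermediateField.mem_fixingSubgroup_iff] at hτ
    have hτα : τ α' = α' := hτ α' (IntermediateField.mem_adjoin_simple_self ℚ α')
    obtain ⟨k, rfl⟩ := hgenall τ
    obtain ⟨t, rfl⟩ := hdvd k hτα
    rw [pow_mul]
    exact Subgroup.npow_mem_zpowers _ _
  have hfixsub : fixingSubgroup (IntermediateField.adjoin ℚ ({α'} : Set ℚ⟮ζ⟯)) =
      Subgroup.zpowers (σ ^ n) := le_antisymm hle2 hle1
  have hFF : fixedField (Subgroup.zpowers (σ ^ n)) =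
      IntermediateField.adjoin ℚ ({α'} : Set ℚ⟮ζ⟯) := by
    rw [← hfixsub, IsGalois.fixedField_fixingSubgroup]
  -- first conjunct
  have hmapeq : IntermediateField.adjoin ℚ ({α} : Set ℂ) =
      IntermediateField.map (IntermediateField.adjoin ℚ ({ζ} : Set ℂ)).val
        (fixedField (Subgroup.zpowers (σ ^ n))) := by
    have h := congrArg (IntermediateField.map (IntermediateField.adjoin ℚ ({ζ} : Set ℂ)).val) hFF
    refine Eq.trans ?_ h.symm
    have h3 := IntermediateField.adjoin_map (F := ℚ) (S := ({α'} : Set ℚ⟮ζ⟯))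
      (IntermediateField.adjoin ℚ ({ζ} : Set ℂ)).val
    rw [Set.image_singleton, hvalα] at h3
    exact h3.symm
  -- normality of ⟨σ^n⟩
  haveI hnormal : (Subgroup.zpowers (σ ^ n)).Normal := by
    constructor
    intro x hx g
    obtain ⟨k, rfl⟩ := hgenall g
    obtain ⟨t, rfl⟩ := Subgroup.mem_zpowers_iff.mp hx
    have hc : Commute (σ ^ k) ((σ ^ n) ^ t) := ((Commute.refl σ).pow_pow k n).zpow_right t
    rw [hc.eq, mul_inv_cancel_right]
    exact Subgroup.mem_zpowers_iff.mpr ⟨t, rfl⟩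
  haveI hGF := IsGalois.of_fixedField_normal_subgroup (K := ℚ) (L := ℚ⟮ζ⟯)
    (Subgroup.zpowers (σ ^ n))
  -- transfer to ℚ(α)
  have e1' := (IntermediateField.equivMap (fixedField (Subgroup.zpowers (σ ^ n)))
      (IntermediateField.adjoin ℚ ({ζ} : Set ℂ)).val).trans
    (IntermediateField.equivOfEq hmapeq.symm)
  have hGal : IsGalois ℚ (IntermediateField.adjoin ℚ ({α} : Set ℂ)) :=
    IsGalois.of_algEquiv e1'
  -- finrank
  have hcardH : Fintype.card (Subgroup.zpowers (σ ^ n)) = r := by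
    rw [← Nat.card_eq_fintype_card, Nat.card_zpowers, orderOf_pow, horder,
      Nat.gcd_eq_right hnq]
  have hrankF : Module.finrank ℚ ↥(fixedField (Subgroup.zpowers (σ ^ n))) = n := by
    have h1 := IntermediateField.finrank_fixedField_eq_card (Subgroup.zpowers (σ ^ n))
      (F := ℚ) (E := ℚ⟮ζ⟯)
    have h3 := Module.finrank_mul_finrank ℚ
      ↥(fixedField (Subgroup.zpowers (σ ^ n))) ↥ℚ⟮ζ⟯
    rw [h1, Nat.card_eq_fintype_card, hcardH, hfinK] at h3
    have h4 : Module.finrank ℚ ↥(fixedField (Subgroup.zpowers (σ ^ n))) * r = n * r := by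
      rw [h3, mul_comm n r, hrn]
    exact Nat.eq_of_mul_eq_mul_right hr0 h4
  have hranks : Module.finrank ℚ (IntermediateField.adjoin ℚ ({α} : Set ℂ)) = n := by
    rw [← e1'.toLinearEquiv.finrank_eq, hrankF]
  -- cyclicity
  haveI hGcyc : IsCyclic (ℚ⟮ζ⟯ ≃ₐ[ℚ] ℚ⟮ζ⟯) :=
    isCyclic_of_orderOf_eq_card σ (by rw [horder, Nat.card_eq_fintype_card, hcard])
  haveI hQcyc : IsCyclic ((ℚ⟮ζ⟯ ≃ₐ[ℚ] ℚ⟮ζ⟯) ⧸ Subgroup.zpowers (σ ^ n)) :=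
    isCyclic_of_surjective (QuotientGroup.mk' _) (QuotientGroup.mk'_surjective _)
  have e2 := IsGalois.normalAutEquivQuotient (Subgroup.zpowers (σ ^ n))
  have e3 := AlgEquiv.autCongr e1'
  have hcyc2 : IsCyclic ((IntermediateField.adjoin ℚ ({α} : Set ℂ)) ≃ₐ[ℚ]
      (IntermediateField.adjoin ℚ ({α} : Set ℂ))) :=
    isCyclic_of_surjective (e3.toMonoidHom.comp e2.toMonoidHom)
      (e3.surjective.comp e2.surjective)
  exact ⟨hmapeq, hGal, hranks, hcyc2⟩
end

section
/- Let q be a prime, let m be a primitive root modulo q, let n > 1 be an even divisor of q − 1 such that (q − 1)/n is odd, let ζ_q = exp(2πi/q) ∈ ℂ, and set α_n = Σ_{j=0}^{(q−1)/n − 1} ζ_q^{m^{jn}}. Then α_n is not a real number. In particular, ℚ(α_n)/ℚ is a non-real cyclic extension of degree n. -/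
open Polynomial Complex IntermediateField

lemma gp_c_eq_zero (q : ℕ) (hq : q.Prime) [NeZero q] (ζ : ℂ) (hζq : IsPrimitiveRoot ζ q)
    (c : ZMod q → ℚ) (hc0 : c 0 = 0)
    (hsum : ∑ a : ZMod q, c a • ζ ^ a.val = 0) : ∀ a, c a = 0 := by
  have hdeg : (minpoly ℚ ζ).natDegree = q - 1 := by
    rw [← cyclotomic_eq_minpoly_rat hζq hq.pos, natDegree_cyclotomic, Nat.totient_prime hq]
  have li0 : LinearIndependent ℚ fun i : Fin (q - 1) => ζ ^ (i : ℕ) := by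
    have h := linearIndependent_pow (K := ℚ) ζ
    rwa [hdeg] at h
  have hζ0 : ζ ≠ 0 := fun h => by
    simpa [h, zero_pow hq.ne_zero] using hζq.pow_eq_one
  have li : LinearIndependent ℚ fun i : Fin (q - 1) => ζ ^ ((i : ℕ) + 1) := by
    have hcomp : (fun i : Fin (q - 1) => ζ ^ ((i : ℕ) + 1)) =
        (LinearMap.mulLeft ℚ ζ) ∘ (fun i : Fin (q - 1) => ζ ^ (i : ℕ)) := by
      funext i
      simp [LinearMap.mulLeft_apply, pow_succ, mul_comm]
    rw [hcomp]
    exact li0.map' (LinearMap.mulLeft ℚ ζ)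
      (LinearMap.ker_eq_bot.2 (mul_right_injective₀ hζ0))
  -- rewrite the sum
  have hq1 : 1 ≤ q := hq.pos
  have hsum2 : ∑ i : Fin (q - 1), c (((i : ℕ) + 1 : ℕ) : ZMod q) • ζ ^ ((i : ℕ) + 1) = 0 := by
    rw [Fin.sum_univ_eq_sum_range (fun i => c ((i + 1 : ℕ) : ZMod q) • ζ ^ (i + 1))]
    have h1 : ∑ a : ZMod q, c a • ζ ^ a.val = ∑ i ∈ Finset.range q, c (i : ZMod q) • ζ ^ i := by
      refine Finset.sum_nbij' (fun a => a.val) (fun i => (i : ZMod q)) ?_ ?_ ?_ ?_ ?_ <;>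
        intro a ha
      · simp [Finset.mem_range, ZMod.val_lt]
      · simp
      · simp [ZMod.natCast_val, ZMod.cast_id]
      · simp [ZMod.val_natCast_of_lt (Finset.mem_range.1 ha)]
      · simp [ZMod.natCast_val, ZMod.cast_id]
    have h2 : ∑ i ∈ Finset.range q, c (i : ZMod q) • ζ ^ i =
        ∑ i ∈ Finset.range (q - 1), c ((i + 1 : ℕ) : ZMod q) • ζ ^ (i + 1) := by
      rw [show Finset.range q = Finset.range ((q - 1) + 1) from by rw [Nat.sub_add_cancel hq1],
        Finset.sum_range_succ']
      simp [hc0]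
    rw [← h2, ← h1, hsum]
  have hz := Fintype.linearIndependent_iff.1 li _ hsum2
  intro a
  rcases eq_or_ne a 0 with rfl | ha
  · exact hc0
  · have hav : 1 ≤ a.val := Nat.one_le_iff_ne_zero.2 fun h => ha (by
      rwa [← ZMod.val_eq_zero])
    have hlt : a.val - 1 < q - 1 := by
      have := ZMod.val_lt a
      omega
    have := hz ⟨a.val - 1, hlt⟩
    simpa [Nat.sub_add_cancel hav, ZMod.natCast_val, ZMod.cast_id] using this

lemma gp_finset_eq (q : ℕ) (hq : q.Prime) [NeZero q] (ζ : ℂ) (hζq : IsPrimitiveRoot ζ q)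
    (S T : Finset (ZMod q)) (hS : (0 : ZMod q) ∉ S) (hT : (0 : ZMod q) ∉ T)
    (h : ∑ a ∈ S, ζ ^ a.val = ∑ a ∈ T, ζ ^ a.val) : S = T := by
  classical
  set c : ZMod q → ℚ := fun a => (if a ∈ S then (1 : ℚ) else 0) - (if a ∈ T then (1 : ℚ) else 0)
    with hc
  have hc0 : c 0 = 0 := by simp [hc, hS, hT]
  have hsum : ∑ a : ZMod q, c a • ζ ^ a.val = 0 := by
    have e1 : ∀ (U : Finset (ZMod q)),
        ∑ a : ZMod q, (if a ∈ U then (1 : ℚ) else 0) • ζ ^ a.val = ∑ a ∈ U, ζ ^ a.val := by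
      intro U
      simp only [ite_smul, one_smul, zero_smul]
      rw [Finset.sum_ite_mem, Finset.univ_inter]
    simp only [hc, sub_smul, Finset.sum_sub_distrib, e1, h, sub_self]
  have hz := gp_c_eq_zero q hq ζ hζq c hc0 hsum
  ext a
  have := hz a
  by_cases haS : a ∈ S <;> by_cases haT : a ∈ T <;> simp [haS, haT, hc] at this ⊢

set_option maxHeartbeats 3000000 in
set_option synthInstance.maxHeartbeats 400000 in
/-- Let `q` be a prime, `m` a primitive root modulo `q`, and `n > 1` an even divisor of
`q - 1` such that `(q - 1)/n` is odd. Let `ζ_q = exp(2πi/q)` and let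
`α_n = Σ_{j=0}^{(q-1)/n - 1} ζ_q^(m^(j*n))` be the Gaussian period of degree `n`. Then
`α_n` is not real; in particular `ℚ(α_n)/ℚ` is a non-real cyclic extension of degree `n`. -/
theorem gaussian_period_not_real
    (q : ℕ) (hq : q.Prime) (m : ℕ) (hm : orderOf (m : ZMod q) = q - 1)
    (n : ℕ) (hn : 1 < n) (hneven : Even n) (hnq : n ∣ q - 1) (hodd : Odd ((q - 1) / n))
    (ζ : ℂ) (hζ : ζ = Complex.exp (2 * Real.pi * Complex.I / q))
    (α : ℂ) (hα : α = ∑ j ∈ Finset.range ((q - 1) / n), ζ ^ (m ^ (j * n))) :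
    α.im ≠ 0 ∧
    ¬ ((IntermediateField.adjoin ℚ ({α} : Set ℂ) : Set ℂ) ⊆ Set.range ((↑) : ℝ → ℂ)) ∧
    Module.finrank ℚ (IntermediateField.adjoin ℚ ({α} : Set ℂ)) = n ∧
    IsCyclic ((IntermediateField.adjoin ℚ ({α} : Set ℂ)) ≃ₐ[ℚ]
      (IntermediateField.adjoin ℚ ({α} : Set ℂ))) := by
  classical
  haveI : Fact q.Prime := ⟨hq⟩
  haveI : NeZero q := ⟨hq.ne_zero⟩
  set f := (q - 1) / n with hfdef
  have hqf : n * f = q - 1 := Nat.mul_div_cancel' hnq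
  have hf0 : f ≠ 0 := by rintro h; rw [h] at hodd; simp [Nat.odd_iff] at hodd
  have hq2 : 2 < q := by
    have h2 : 2 ≤ n := hn
    have : 1 ≤ f := Nat.one_le_iff_ne_zero.2 hf0
    have h3 : 2 * 1 ≤ n * f := Nat.mul_le_mul h2 this
    have h4 : 2 ≤ q - 1 := by rw [← hqf]; omega
    omega
  -- the primitive root
  have hζq : IsPrimitiveRoot ζ q := by rw [hζ]; exact Complex.isPrimitiveRoot_exp q hq.ne_zero
  have hζ1 : ζ ^ q = 1 := hζq.pow_eq_one
  -- m is a unit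
  have hpow : (m : ZMod q) ^ (q - 1) = 1 := by rw [← hm]; exact pow_orderOf_eq_one _
  have hunit : IsUnit (m : ZMod q) := IsUnit.of_mul_eq_one ((m : ZMod q) ^ (q - 2)) (by
    rw [← pow_succ']
    have h21 : q - 2 + 1 = q - 1 := by omega
    rw [h21, hpow])
  set u : (ZMod q)ˣ := hunit.unit with hudef
  have hu : (u : ZMod q) = m := hunit.unit_spec
  have hordu : orderOf u = q - 1 := by rw [← orderOf_units, hu, hm]
  set g : (ZMod q)ˣ := u ^ n with hgdef
  have hordg : orderOf g = f := by
    rw [hgdef, orderOf_pow, hordu, Nat.gcd_eq_right hnq]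
  -- exponent bookkeeping
  have e_nat : ∀ k : ℕ, ζ ^ k = ζ ^ ((k : ZMod q)).val := by
    intro k
    conv_lhs => rw [← Nat.div_add_mod k q]
    rw [pow_add, pow_mul, hζ1, one_pow, one_mul, ZMod.val_natCast]
  have hmgj : ∀ j : ℕ, ((m ^ (j * n) : ℕ) : ZMod q) = ((g ^ j : (ZMod q)ˣ) : ZMod q) := by
    intro j
    have hg : (g ^ j : (ZMod q)ˣ) = u ^ (j * n) := by
      rw [hgdef, ← pow_mul, mul_comm n j]
    rw [hg, Nat.cast_pow, Units.val_pow_eq_pow_val, hu]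
  -- the canonical period sets
  set Sf : (ZMod q)ˣ → Finset (ZMod q) :=
    fun t => Finset.image (fun j => ((t * g ^ j : (ZMod q)ˣ) : ZMod q)) (Finset.range f)
    with hSfdef
  have hinj : ∀ t : (ZMod q)ˣ, Set.InjOn (fun j => ((t * g ^ j : (ZMod q)ˣ) : ZMod q))
      (Finset.range f) := by
    intro t j hj k hk hjk
    simp only [Finset.coe_range, Set.mem_Iio] at hj hk
    simp only at hjk
    have : (t * g ^ j : (ZMod q)ˣ) = t * g ^ k := Units.ext hjk
    have hgg : (g ^ j : (ZMod q)ˣ) = g ^ k := by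
      exact mul_left_cancel this
    exact pow_injOn_Iio_orderOf (by rwa [Set.mem_Iio, hordg]) (by rwa [Set.mem_Iio, hordg]) hgg
  have hS0 : ∀ t : (ZMod q)ˣ, (0 : ZMod q) ∉ Sf t := by
    intro t ht
    simp only [hSfdef, Finset.mem_image] at ht
    obtain ⟨j, -, hj⟩ := ht
    exact Units.ne_zero _ hj
  have hcardSf : ∀ t : (ZMod q)ˣ, (Sf t).card = f := by
    intro t
    rw [hSfdef]
    rw [Finset.card_image_of_injOn (hinj t), Finset.card_range]
  have hP : ∀ t : (ZMod q)ˣ, ∑ a ∈ Sf t, ζ ^ a.val =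
      ∑ j ∈ Finset.range f, ζ ^ ((t * g ^ j : (ZMod q)ˣ) : ZMod q).val := by
    intro t
    rw [hSfdef]
    exact Finset.sum_image (fun x hx y hy h => hinj t hx hy h)
  -- coset characterization
  have KEY1 : ∀ t : (ZMod q)ˣ, t ∈ Subgroup.zpowers g → Sf t = Sf 1 := by
    intro t ht
    rw [mem_zpowers_iff_mem_range_orderOf, hordg] at ht
    simp only [Finset.mem_image, Finset.mem_range] at ht
    obtain ⟨k, hk, rfl⟩ := ht
    apply Finset.eq_of_subset_of_card_le
    · intro a ha
      simp only [hSfdef, Finset.mem_image, Finset.mem_range] at ha ⊢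
      obtain ⟨j, hj, rfl⟩ := ha
      refine ⟨(k + j) % f, Nat.mod_lt _ (Nat.pos_of_ne_zero hf0), ?_⟩
      rw [one_mul, ← pow_add]
      congr 1
      rw [← hordg]
      exact pow_mod_orderOf g (k + j)
    · rw [hcardSf, hcardSf]
  have KEY2 : ∀ t : (ZMod q)ˣ, Sf t = Sf 1 → t ∈ Subgroup.zpowers g := by
    intro t ht
    have h1 : ((t : (ZMod q)ˣ) : ZMod q) ∈ Sf t := by
      simp only [hSfdef, Finset.mem_image, Finset.mem_range]
      exact ⟨0, Nat.pos_of_ne_zero hf0, by rw [pow_zero, mul_one]⟩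
    rw [ht] at h1
    simp only [hSfdef, Finset.mem_image, Finset.mem_range, one_mul] at h1
    obtain ⟨j, -, hj⟩ := h1
    exact (Units.ext hj) ▸ Subgroup.npow_mem_zpowers g j
  -- α is the canonical period
  have hαP : α = ∑ a ∈ Sf 1, ζ ^ a.val := by
    rw [hα, hP]
    refine Finset.sum_congr rfl fun j hj => ?_
    rw [e_nat, hmgj j, one_mul]
  have KEY : ∀ t : (ZMod q)ˣ,
      (∑ j ∈ Finset.range f, ζ ^ ((t * g ^ j : (ZMod q)ˣ) : ZMod q).val = α) ↔
      t ∈ Subgroup.zpowers g := by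
    intro t
    constructor
    · intro h
      refine KEY2 t (gp_finset_eq q hq ζ hζq _ _ (hS0 t) (hS0 1) ?_)
      rw [hP, hP, h, hαP, hP]
    · intro h
      rw [← hP, KEY1 t h, ← hαP]
  -- Part 1 : the conjugate
  have hζconj : (starRingEnd ℂ) ζ = ζ ^ (q - 1) := by
    have h1 : (starRingEnd ℂ) ζ = ζ⁻¹ := by
      rw [hζ, ← Complex.exp_conj, ← Complex.exp_neg]
      congr 1
      simp only [map_div₀, map_mul, Complex.conj_I, Complex.conj_ofReal, map_ofNat,
        Complex.conj_natCast]
      ring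
    rw [h1, eq_comm]
    have hmul : ζ ^ (q - 1) * ζ = 1 := by rw [← pow_succ, Nat.sub_add_cancel hq.one_le, hζ1]
    exact eq_inv_of_mul_eq_one_left hmul
  have hconjα : (starRingEnd ℂ) α = ∑ j ∈ Finset.range f,
      ζ ^ (((-1 : (ZMod q)ˣ) * g ^ j : (ZMod q)ˣ) : ZMod q).val := by
    rw [hα, map_sum]
    refine Finset.sum_congr rfl fun j hj => ?_
    rw [map_pow, hζconj, ← pow_mul, e_nat, Nat.cast_mul]
    congr 2
    rw [hmgj j]
    have h1 : ((q - 1 : ℕ) : ZMod q) = -1 := by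
      have h2 : ((q - 1 : ℕ) : ZMod q) = (q : ZMod q) - 1 := by
        rw [Nat.cast_sub hq.one_le, Nat.cast_one]
      rw [h2, ZMod.natCast_self, zero_sub]
    rw [h1]
    simp
  have him : α.im ≠ 0 := by
    intro h0
    have hca : (starRingEnd ℂ) α = α := Complex.conj_eq_iff_im.2 h0
    have hmem : (-1 : (ZMod q)ˣ) ∈ Subgroup.zpowers g := by
      rw [← KEY]
      rw [← hconjα, hca]
    have hne : (-1 : (ZMod q)ˣ) ≠ 1 := by
      intro h
      have h' : (-1 : ZMod q) = 1 := by
        have := congrArg (Units.val) h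
        simpa using this
      have h2 : ((2 : ℕ) : ZMod q) = 0 := by push_cast; linear_combination -h'
      have := (ZMod.natCast_eq_zero_iff 2 q).1 h2
      have := Nat.le_of_dvd (by norm_num) this
      omega
    have hord2 : orderOf (-1 : (ZMod q)ˣ) = 2 := by
      refine orderOf_eq_prime ?_ hne
      simp
    have hdvd : 2 ∣ f := by
      rw [← hord2, ← hordg]
      exact orderOf_dvd_of_mem_zpowers hmem
    rw [Nat.odd_iff] at hodd
    omega
  set q' : ℕ+ := ⟨q, hq.pos⟩ with hq'def
  set K : IntermediateField ℚ ℂ := ℚ⟮ζ⟯ with hKdef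
  have hζint : IsIntegral ℚ ζ := (hζq.isIntegral hq.pos).tower_top
  haveI : FiniteDimensional ℚ K := IntermediateField.adjoin.finiteDimensional hζint
  set ζ' : K := IntermediateField.AdjoinSimple.gen ℚ ζ with hζ'def
  have hζ'coe : (ζ' : ℂ) = ζ := rfl
  have hζqP : IsPrimitiveRoot ζ ((q' : ℕ)) := hζq
  have hζ'q : IsPrimitiveRoot ζ' ((q' : ℕ)) := by
    rw [← IsPrimitiveRoot.coe_submonoidClass_iff]
    exact hζqP
  haveI cycInst : IsCyclotomicExtension {(q' : ℕ)} ℚ K := by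
    have H := IntermediateField.adjoin_simple_toSubalgebra_of_isAlgebraic hζint.isAlgebraic
    refine IsCyclotomicExtension.equiv {(q' : ℕ)} ℚ _ (h := ?_) (.refl : K.toSubalgebra ≃ₐ[ℚ] _)
    rw [H]
    exact hζqP.adjoin_isCyclotomicExtension ℚ
  have hirr : Irreducible (Polynomial.cyclotomic q ℚ) := Polynomial.cyclotomic.irreducible_rat hq.pos
  haveI : IsGalois ℚ K := IsCyclotomicExtension.isGalois {(q' : ℕ)} ℚ K
  have hfinK : Module.finrank ℚ K = q - 1 := by
    have h := IsCyclotomicExtension.finrank (n := (q' : ℕ)) K hirr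
    rw [show ((q' : ℕ)) = q from rfl, Nat.totient_prime hq] at h
    exact h
  set e : (K ≃ₐ[ℚ] K) →* (ZMod q)ˣ := hζ'q.autToPow ℚ with hedef
  have einj : Function.Injective e := hζ'q.autToPow_injective ℚ
  have ebij : Function.Bijective e := by
    rw [Fintype.bijective_iff_injective_and_card]
    refine ⟨einj, ?_⟩
    rw [← Nat.card_eq_fintype_card, IsGalois.card_aut_eq_finrank, hfinK, ZMod.card_units_eq_totient, Nat.totient_prime hq]
  -- the period inside K
  set α' : K := ∑ j ∈ Finset.range f, ζ' ^ (m ^ (j * n)) with hα'def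
  have hα'coe : (α' : ℂ) = α := by
    rw [hα'def, hα]
    push_cast
    rfl
  have hα'int : IsIntegral ℚ α' := IsIntegral.of_finite ℚ α'
  -- the action of automorphisms on the period
  have hσ : ∀ σ : K ≃ₐ[ℚ] K, ((σ α' : K) : ℂ) =
      ∑ j ∈ Finset.range f, ζ ^ (((e σ) * g ^ j : (ZMod q)ˣ) : ZMod q).val := by
    intro σ
    have hspec : σ ζ' = ζ' ^ ((e σ : ZMod q)).val := (hζ'q.autToPow_spec ℚ σ).symm
    rw [hα'def, map_sum]
    push_cast
    refine Finset.sum_congr rfl fun j hj => ?_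
    rw [map_pow, hspec]
    push_cast [hζ'coe]
    rw [← pow_mul, e_nat, Nat.cast_mul]
    congr 2
    rw [hmgj j, ZMod.natCast_val, ZMod.cast_id, Units.val_pow_eq_pow_val]
  have hstab : ∀ σ : K ≃ₐ[ℚ] K, σ α' = α' ↔ e σ ∈ Subgroup.zpowers g := by
    intro σ
    rw [← KEY (e σ)]
    constructor
    · intro h
      rw [← hσ σ, ← hα'coe, h]
    · intro h
      have : ((σ α' : K) : ℂ) = ((α' : K) : ℂ) := by rw [hσ σ, h, hα'coe]
      exact Subtype.ext this
  set H : Subgroup (K ≃ₐ[ℚ] K) := Subgroup.comap e (Subgroup.zpowers g) with hHdef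
  have hfixE : (ℚ⟮α'⟯ : IntermediateField ℚ K).fixingSubgroup = H := by
    ext σ
    rw [IntermediateField.mem_fixingSubgroup_iff]
    constructor
    · intro h
      exact Subgroup.mem_comap.2 ((hstab σ).1
        (h α' (IntermediateField.mem_adjoin_simple_self ℚ α')))
    · intro hσmem x hx
      have hfix' : σ α' = α' := (hstab σ).2 (Subgroup.mem_comap.1 hσmem)
      induction hx using IntermediateField.adjoin_induction with
      | mem x hx => rw [Set.mem_singleton_iff] at hx; rw [hx]; exact hfix'
      | algebraMap x => exact σ.commutes x
      | add x y hx hy ihx ihy => rw [map_add, ihx, ihy]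
      | inv x hx ihx => rw [map_inv₀, ihx]
      | mul x y hx hy ihx ihy => rw [map_mul, ihx, ihy]
  have hE'fixed : (ℚ⟮α'⟯ : IntermediateField ℚ K) = IntermediateField.fixedField H := by
    rw [← hfixE]
    exact (IsGalois.fixedField_fixingSubgroup ℚ⟮α'⟯).symm
  have hcardH : Fintype.card H = f := by
    have heq : Fintype.card H = Fintype.card (Subgroup.zpowers g) := by
      refine Fintype.card_congr (Equiv.subtypeEquiv (Equiv.ofBijective e ebij) fun σ => ?_)
      rfl
    rw [heq, Fintype.card_zpowers, hordg]
  have hrankE'K : Module.finrank (↥(ℚ⟮α'⟯ : IntermediateField ℚ K)) (↥K) = f := by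
    rw [hE'fixed, finrank_fixedField_eq_card, Nat.card_eq_fintype_card, hcardH]
  have hrankE' : Module.finrank ℚ (↥(ℚ⟮α'⟯ : IntermediateField ℚ K)) = n := by
    have htow : Module.finrank ℚ (↥(ℚ⟮α'⟯ : IntermediateField ℚ K)) *
        Module.finrank (↥(ℚ⟮α'⟯ : IntermediateField ℚ K)) (↥K) = Module.finrank ℚ (↥K) :=
      Module.finrank_mul_finrank ℚ _ _
    rw [hrankE'K, hfinK, ← hqf] at htow
    exact Nat.eq_of_mul_eq_mul_right (Nat.pos_of_ne_zero hf0) htow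
  have hminα' : (minpoly ℚ α').natDegree = n := by
    rw [← IntermediateField.adjoin.finrank hα'int]
    exact hrankE'
  have hminαeq : minpoly ℚ α = minpoly ℚ α' := by
    have hinj2 : Function.Injective (algebraMap K ℂ) := (algebraMap K ℂ).injective
    have := minpoly.algebraMap_eq (A := ℚ) hinj2 α'
    rw [← this]
    congr 1
    exact hα'coe.symm
  have hαint : IsIntegral ℚ α := by
    have := hα'int.map (IsScalarTower.toAlgHom ℚ K ℂ)
    rwa [show (IsScalarTower.toAlgHom ℚ K ℂ) α' = α from hα'coe] at this
  have hrankα : Module.finrank ℚ (IntermediateField.adjoin ℚ ({α} : Set ℂ)) = n := by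
    rw [IntermediateField.adjoin.finrank hαint, hminαeq, hminα']
  -- cyclic
  haveI hHnormal : H.Normal := by
    constructor
    intro a ha b
    rw [hHdef, Subgroup.mem_comap] at ha ⊢
    rw [map_mul, map_mul, map_inv, mul_comm (e b) (e a), mul_inv_cancel_right]
    exact ha
  haveI : IsCyclic (ZMod q)ˣ := inferInstance
  have hcycK : IsCyclic (K ≃ₐ[ℚ] K) :=
    isCyclic_of_surjective _ (MulEquiv.ofBijective e ebij).symm.surjective
  have hcycQ : IsCyclic ((K ≃ₐ[ℚ] K) ⧸ H) :=
    isCyclic_of_surjective _ (QuotientGroup.mk'_surjective H)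
  have hcycE' := isCyclic_of_surjective _ (IsGalois.normalAutEquivQuotient H).surjective
  have ψ2 : AdjoinRoot (minpoly ℚ α) ≃ₐ[ℚ] (↥(ℚ⟮α'⟯ : IntermediateField ℚ K)) := by
    rw [hminαeq]
    exact IntermediateField.adjoinRootEquivAdjoin ℚ hα'int
  have Φ : (↥(IntermediateField.adjoin ℚ ({α} : Set ℂ))) ≃ₐ[ℚ] (↥(IntermediateField.fixedField H)) :=
    ((IntermediateField.adjoinRootEquivAdjoin ℚ hαint).symm.trans ψ2).trans
      (IntermediateField.equivOfEq hE'fixed)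
  have hcycα : IsCyclic ((IntermediateField.adjoin ℚ ({α} : Set ℂ)) ≃ₐ[ℚ]
      (IntermediateField.adjoin ℚ ({α} : Set ℂ))) :=
    isCyclic_of_surjective (hH := hcycE') _ (AlgEquiv.autCongr Φ.symm).surjective
  -- Part 2
  have hnotreal : ¬ ((IntermediateField.adjoin ℚ ({α} : Set ℂ) : Set ℂ) ⊆
      Set.range ((↑) : ℝ → ℂ)) := by
    intro hsub
    obtain ⟨r, hr⟩ := hsub (IntermediateField.subset_adjoin ℚ {α} rfl)
    apply him
    rw [← hr]
    exact Complex.ofReal_im r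
  exact ⟨him, hnotreal, hrankα, hcycα⟩
end
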